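/- arXiv:1607.04143 — 4 statements merged into one kernel-verified Lean document; each statement's English description precedes it below -/
import Mathlib

section
/- Under hypotheses (i)–(iii), for every t = 1, …, n the random vector (A^t, B^t, C^t) is independent of the random vector (A_{t+1}^n, B_{t+1}^n). -/
open MeasureTheory

noncomputable section

/-- Conditional independence of finite-valued random variables `U` and `V` given `W`:
`μ(U = u, V = v | W = w) = μ(U = u | W = w) · μ(V = v | W = w)` whenever
`μ(W = w) > 0`. -/
def CondIndepRV {Ω α β γ : Type*} [MeasurableSpace Ω] (μ : Measure Ω)
    (U : Ω → α) (V : Ω → β) (W : Ω → γ) : Prop :=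
  ∀ u v w, 0 < (μ {ω | W ω = w}).toReal →
    (μ {ω | U ω = u ∧ V ω = v ∧ W ω = w}).toReal / (μ {ω | W ω = w}).toReal =
      ((μ {ω | U ω = u ∧ W ω = w}).toReal / (μ {ω | W ω = w}).toReal) *
        ((μ {ω | V ω = v ∧ W ω = w}).toReal / (μ {ω | W ω = w}).toReal)

/-- Independence of a pair of finite-valued random variables. -/
def IndepRV {Ω α β : Type*} [MeasurableSpace Ω] (μ : Measure Ω)
    (U : Ω → α) (V : Ω → β) : Prop :=
  ∀ u v, (μ {ω | U ω = u ∧ V ω = v}).toReal =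
    (μ {ω | U ω = u}).toReal * (μ {ω | V ω = v}).toReal

lemma condIndep_mul {Ω α β γ : Type*} [MeasurableSpace Ω] {μ : Measure Ω}
    {U : Ω → α} {V : Ω → β} {W : Ω → γ} (h : CondIndepRV μ U V W) (u : α) (v : β) (w : γ)
    (hw : 0 < (μ {ω | W ω = w}).toReal) :
    (μ {ω | U ω = u ∧ V ω = v ∧ W ω = w}).toReal * (μ {ω | W ω = w}).toReal =
      (μ {ω | U ω = u ∧ W ω = w}).toReal * (μ {ω | V ω = v ∧ W ω = w}).toReal := by
  have h2 := h u v w hw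
  have hne : (μ {ω | W ω = w}).toReal ≠ 0 := ne_of_gt hw
  field_simp at h2
  exact h2

lemma fiber_sum {Ω : Type*} [MeasurableSpace Ω] (μ : Measure Ω) [IsFiniteMeasure μ]
    {α : Type*} [Fintype α] (P : Set Ω) (F : Ω → α)
    (hm : ∀ x, MeasurableSet (P ∩ {ω | F ω = x})) :
    (μ P).toReal = ∑ x, (μ (P ∩ {ω | F ω = x})).toReal := by
  have hP : P = ⋃ x, P ∩ {ω | F ω = x} := by ext ω; simp
  have hd : Pairwise (Function.onFun Disjoint (fun x => P ∩ {ω | F ω = x})) := by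
    intro x y hxy
    simp only [Function.onFun, Set.disjoint_left]
    rintro ω ⟨-, hx⟩ ⟨-, hy⟩
    exact hxy (hx.symm.trans hy)
  conv_lhs => rw [hP, measure_iUnion hd hm, tsum_fintype,
    ENNReal.toReal_sum (fun x _ => measure_ne_top μ _)]

lemma key {Ω : Type*} [MeasurableSpace Ω] {n : ℕ}
    {𝔄 𝔅 ℭ : Fin n → Type*}
    [∀ t, Fintype (𝔄 t)] [∀ t, Fintype (𝔅 t)] [∀ t, Fintype (ℭ t)]
    (μ : Measure Ω) [IsProbabilityMeasure μ]
    (A : ∀ t, Ω → 𝔄 t) (B : ∀ t, Ω → 𝔅 t) (C : ∀ t, Ω → ℭ t)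
    (hAm : ∀ t a, MeasurableSet {ω | A t ω = a})
    (hBm : ∀ t b, MeasurableSet {ω | B t ω = b})
    (hCm : ∀ t c, MeasurableSet {ω | C t ω = c})
    (hi : ∀ (T : Finset (Fin n)) (ab : ∀ t, 𝔄 t × 𝔅 t),
      (μ {ω | ∀ t ∈ T, (A t ω, B t ω) = ab t}).toReal =
        ∏ t ∈ T, (μ {ω | (A t ω, B t ω) = ab t}).toReal)
    (hiii : ∀ t : Fin n, CondIndepRV μ (C t)
      (fun ω => fun s : {s : Fin n // s ≠ t} => (A s.1 ω, B s.1 ω))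
      (fun ω => (A t ω, B t ω, fun s : {s : Fin n // s < t} => C s.1 ω)))
    (a : ∀ s, 𝔄 s) (b : ∀ s, 𝔅 s) (c : ∀ s, ℭ s) :
    ∀ (k : ℕ) (T : Finset (Fin n)), (∀ s : Fin n, s.val < k → s ∈ T) →
    (μ {ω | (∀ s ∈ T, A s ω = a s ∧ B s ω = b s) ∧
        ∀ s : Fin n, s.val < k → C s ω = c s}).toReal
      = (μ {ω | ∀ s : Fin n, s.val < k → A s ω = a s ∧ B s ω = b s ∧ C s ω = c s}).toReal
        * ∏ s ∈ T.filter (fun s => k ≤ s.val), (μ {ω | A s ω = a s ∧ B s ω = b s}).toReal := by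
  have hi' : ∀ T : Finset (Fin n), (μ {ω | ∀ s ∈ T, A s ω = a s ∧ B s ω = b s}).toReal =
      ∏ s ∈ T, (μ {ω | A s ω = a s ∧ B s ω = b s}).toReal := by
    intro T
    have h := hi T (fun s => (a s, b s))
    simpa only [Prod.mk.injEq] using h
  intro k
  induction k with
  | zero =>
    intro T _
    have h1 : {ω : Ω | (∀ s ∈ T, A s ω = a s ∧ B s ω = b s) ∧
        ∀ s : Fin n, s.val < 0 → C s ω = c s}
        = {ω : Ω | ∀ s ∈ T, A s ω = a s ∧ B s ω = b s} := by ext ω; simp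
    have h2 : {ω : Ω | ∀ s : Fin n, s.val < 0 → A s ω = a s ∧ B s ω = b s ∧ C s ω = c s}
        = Set.univ := by ext ω; simp
    rw [h1, h2, measure_univ, Finset.filter_true_of_mem (fun s _ => Nat.zero_le _), hi' T]
    simp
  | succ k ih =>
    intro T hT
    by_cases hk : k < n
    · -- main inductive step, k < n
      have hABm : ∀ (s : Fin n) (p : 𝔄 s × 𝔅 s), MeasurableSet {ω | (A s ω, B s ω) = p} := by
        intro s p
        have he : {ω | (A s ω, B s ω) = p} = {ω | A s ω = p.1} ∩ {ω | B s ω = p.2} := by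
          ext ω; simp [Prod.ext_iff]
        rw [he]; exact (hAm s p.1).inter (hBm s p.2)
      have hEvm : ∀ (j : ℕ) (T'' : Finset (Fin n)), MeasurableSet {ω : Ω |
          (∀ s ∈ T'', A s ω = a s ∧ B s ω = b s) ∧ ∀ s : Fin n, s.val < j → C s ω = c s} := by
        intro j T''
        have he : {ω : Ω | (∀ s ∈ T'', A s ω = a s ∧ B s ω = b s) ∧
            ∀ s : Fin n, s.val < j → C s ω = c s}
            = (⋂ s ∈ T'', ({ω | A s ω = a s} ∩ {ω | B s ω = b s})) ∩
              ⋂ s : Fin n, ⋂ (_ : s.val < j), {ω | C s ω = c s} := by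
          ext ω
          simp only [Set.mem_setOf_eq, Set.mem_inter_iff, Set.mem_iInter]
        rw [he]
        exact (MeasurableSet.biInter (Set.to_countable _)
            fun s _ => (hAm s _).inter (hBm s _)).inter
          (MeasurableSet.iInter fun s => MeasurableSet.iInter fun _ => hCm s _)
      classical
      set kk : Fin n := ⟨k, hk⟩ with hkkdef
      have hkkT : kk ∈ T := hT kk (Nat.lt_succ_self k)
      set w0 : 𝔄 kk × 𝔅 kk × ((s : {s : Fin n // s < kk}) → ℭ s.1) :=
        (a kk, b kk, fun s => c s.1) with hw0def
      set W : Set Ω :=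
        {ω | (A kk ω, B kk ω, fun s : {s : Fin n // s < kk} => C s.1 ω) = w0} with hWdef
      by_cases hW0 : (μ W).toReal = 0
      · -- degenerate case: everything vanishes
        have hz : ∀ S : Set Ω, S ⊆ W → (μ S).toReal = 0 := fun S hS =>
          le_antisymm (hW0 ▸ ENNReal.toReal_mono (measure_ne_top μ W) (measure_mono hS))
            ENNReal.toReal_nonneg
        have hs1 : {ω : Ω | (∀ s ∈ T, A s ω = a s ∧ B s ω = b s) ∧
            ∀ s : Fin n, s.val < k + 1 → C s ω = c s} ⊆ W := by
          rintro ω ⟨h1, h2⟩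
          have hA := h1 kk hkkT
          show (A kk ω, B kk ω, fun s : {s : Fin n // s < kk} => C s.1 ω) = w0
          rw [hw0def, hA.1, hA.2]
          exact congrArg _ (congrArg _ (funext fun s => h2 s.1 (by
            have hs : s.1.val < k := s.2; omega)))
        have hs2 : {ω : Ω | ∀ s : Fin n, s.val < k + 1 →
            A s ω = a s ∧ B s ω = b s ∧ C s ω = c s} ⊆ W := by
          intro ω h
          have h1 := h kk (Nat.lt_succ_self k)
          show (A kk ω, B kk ω, fun s : {s : Fin n // s < kk} => C s.1 ω) = w0
          rw [hw0def, h1.1, h1.2.1]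
          exact congrArg _ (congrArg _ (funext fun s => (h s.1 (by
            have hs : s.1.val < k := s.2; omega)).2.2))
        rw [hz _ hs1, hz _ hs2, zero_mul]
      · have hWpos : 0 < (μ W).toReal :=
          lt_of_le_of_ne ENNReal.toReal_nonneg (Ne.symm hW0)
        set G : Set Ω := {ω | C kk ω = c kk ∧
          (A kk ω, B kk ω, fun s : {s : Fin n // s < kk} => C s.1 ω) = w0} with hGdef
        have star : ∀ v : ∀ s : {s : Fin n // s ≠ kk}, 𝔄 s.1 × 𝔅 s.1,
            (μ {ω | C kk ω = c kk ∧
                (fun s : {s : Fin n // s ≠ kk} => (A s.1 ω, B s.1 ω)) = v ∧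
                (A kk ω, B kk ω, fun s : {s : Fin n // s < kk} => C s.1 ω) = w0}).toReal
              * (μ W).toReal
            = (μ G).toReal *
              (μ {ω | (fun s : {s : Fin n // s ≠ kk} => (A s.1 ω, B s.1 ω)) = v ∧
                (A kk ω, B kk ω, fun s : {s : Fin n // s < kk} => C s.1 ω) = w0}).toReal := by
          intro v
          exact condIndep_mul (hiii kk) (c kk) v w0 hWpos
        have main : ∀ T' : Finset (Fin n), (∀ s : Fin n, s.val < k + 1 → s ∈ T') →
            (μ {ω | (∀ s ∈ T', A s ω = a s ∧ B s ω = b s) ∧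
                ∀ s : Fin n, s.val < k + 1 → C s ω = c s}).toReal * (μ W).toReal
            = (μ G).toReal * (μ {ω | (∀ s ∈ T', A s ω = a s ∧ B s ω = b s) ∧
                ∀ s : Fin n, s.val < k → C s ω = c s}).toReal := by
          intro T' hT'
          have hkkT' : kk ∈ T' := hT' kk (Nat.lt_succ_self k)
          have hFibm : ∀ x : ∀ s : {s : Fin n // s ∉ T'}, 𝔄 s.1 × 𝔅 s.1,
              MeasurableSet {ω : Ω |
                (fun s : {s : Fin n // s ∉ T'} => (A s.1 ω, B s.1 ω)) = x} := by
            intro x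
            have he : {ω : Ω | (fun s : {s : Fin n // s ∉ T'} => (A s.1 ω, B s.1 ω)) = x}
                = ⋂ s : {s : Fin n // s ∉ T'}, {ω | (A s.1 ω, B s.1 ω) = x s} := by
              ext ω; simp [funext_iff]
            rw [he]
            exact MeasurableSet.iInter fun s => hABm s.1 (x s)
          have h1 := fiber_sum μ {ω : Ω | (∀ s ∈ T', A s ω = a s ∧ B s ω = b s) ∧
              ∀ s : Fin n, s.val < k + 1 → C s ω = c s}
            (fun ω => fun s : {s : Fin n // s ∉ T'} => (A s.1 ω, B s.1 ω))
            (fun x => (hEvm (k+1) T').inter (hFibm x))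
          have h2 := fiber_sum μ {ω : Ω | (∀ s ∈ T', A s ω = a s ∧ B s ω = b s) ∧
              ∀ s : Fin n, s.val < k → C s ω = c s}
            (fun ω => fun s : {s : Fin n // s ∉ T'} => (A s.1 ω, B s.1 ω))
            (fun x => (hEvm k T').inter (hFibm x))
          rw [h1, h2, Finset.sum_mul, Finset.mul_sum]
          apply Finset.sum_congr rfl
          intro x _
          have eq1 : {ω : Ω | (∀ s ∈ T', A s ω = a s ∧ B s ω = b s) ∧
              ∀ s : Fin n, s.val < k + 1 → C s ω = c s} ∩
              {ω | (fun s : {s : Fin n // s ∉ T'} => (A s.1 ω, B s.1 ω)) = x}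
              = {ω | C kk ω = c kk ∧
                (fun s : {s : Fin n // s ≠ kk} => (A s.1 ω, B s.1 ω)) =
                  (fun s : {s : Fin n // s ≠ kk} =>
                    if h : s.1 ∈ T' then (a s.1, b s.1) else x ⟨s.1, h⟩) ∧
                (A kk ω, B kk ω, fun s : {s : Fin n // s < kk} => C s.1 ω) = w0} := by
            ext ω
            constructor
            · rintro ⟨⟨hAB, hC⟩, hx⟩
              refine ⟨hC kk (Nat.lt_succ_self k), funext fun s => ?_, ?_⟩
              · by_cases hmem : s.1 ∈ T'
                · rw [dif_pos hmem, (hAB s.1 hmem).1, (hAB s.1 hmem).2]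
                · rw [dif_neg hmem]
                  exact congrFun hx ⟨s.1, hmem⟩
              · show (A kk ω, B kk ω, fun s : {s : Fin n // s < kk} => C s.1 ω) = w0
                rw [hw0def, (hAB kk hkkT').1, (hAB kk hkkT').2]
                exact congrArg _ (congrArg _ (funext fun s => hC s.1 (by
                  have hs : s.1.val < k := s.2; omega)))
            · rintro ⟨hCkk, hv, hw⟩
              rw [hw0def] at hw
              have hwa : A kk ω = a kk := congrArg (fun p => p.1) hw
              have hwb : B kk ω = b kk := congrArg (fun p => p.2.1) hw
              have hwc : ∀ s : {s : Fin n // s < kk}, C s.1 ω = c s.1 :=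
                fun s => congrFun (congrArg (fun p => p.2.2) hw) s
              refine ⟨⟨fun s hs => ?_, fun s hs => ?_⟩, funext fun s => ?_⟩
              · by_cases hs' : s = kk
                · subst hs'; exact ⟨hwa, hwb⟩
                · have hthis := congrFun hv ⟨s, hs'⟩
                  rw [dif_pos hs] at hthis
                  exact ⟨congrArg Prod.fst hthis, congrArg Prod.snd hthis⟩
              · rcases Nat.lt_succ_iff_lt_or_eq.mp hs with h | h
                · exact hwc ⟨s, h⟩
                · have hskk : s = kk := Fin.ext h
                  rw [hskk]; exact hCkk
              · have hskk : s.1 ≠ kk := fun hcon => s.2 (hcon ▸ hkkT')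
                have hthis := congrFun hv ⟨s.1, hskk⟩
                rw [dif_neg s.2] at hthis
                exact hthis
          have eq2 : {ω : Ω | (∀ s ∈ T', A s ω = a s ∧ B s ω = b s) ∧
              ∀ s : Fin n, s.val < k → C s ω = c s} ∩
              {ω | (fun s : {s : Fin n // s ∉ T'} => (A s.1 ω, B s.1 ω)) = x}
              = {ω | (fun s : {s : Fin n // s ≠ kk} => (A s.1 ω, B s.1 ω)) =
                  (fun s : {s : Fin n // s ≠ kk} =>
                    if h : s.1 ∈ T' then (a s.1, b s.1) else x ⟨s.1, h⟩) ∧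
                (A kk ω, B kk ω, fun s : {s : Fin n // s < kk} => C s.1 ω) = w0} := by
            ext ω
            constructor
            · rintro ⟨⟨hAB, hC⟩, hx⟩
              refine ⟨funext fun s => ?_, ?_⟩
              · by_cases hmem : s.1 ∈ T'
                · rw [dif_pos hmem, (hAB s.1 hmem).1, (hAB s.1 hmem).2]
                · rw [dif_neg hmem]
                  exact congrFun hx ⟨s.1, hmem⟩
              · show (A kk ω, B kk ω, fun s : {s : Fin n // s < kk} => C s.1 ω) = w0
                rw [hw0def, (hAB kk hkkT').1, (hAB kk hkkT').2]
                exact congrArg _ (congrArg _ (funext fun s => hC s.1 s.2))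
            · rintro ⟨hv, hw⟩
              rw [hw0def] at hw
              have hwa : A kk ω = a kk := congrArg (fun p => p.1) hw
              have hwb : B kk ω = b kk := congrArg (fun p => p.2.1) hw
              have hwc : ∀ s : {s : Fin n // s < kk}, C s.1 ω = c s.1 :=
                fun s => congrFun (congrArg (fun p => p.2.2) hw) s
              refine ⟨⟨fun s hs => ?_, fun s hs => ?_⟩, funext fun s => ?_⟩
              · by_cases hs' : s = kk
                · subst hs'; exact ⟨hwa, hwb⟩
                · have hthis := congrFun hv ⟨s, hs'⟩
                  rw [dif_pos hs] at hthis
                  exact ⟨congrArg Prod.fst hthis, congrArg Prod.snd hthis⟩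
              · exact hwc ⟨s, hs⟩
              · have hskk : s.1 ≠ kk := fun hcon => s.2 (hcon ▸ hkkT')
                have hthis := congrFun hv ⟨s.1, hskk⟩
                rw [dif_neg s.2] at hthis
                exact hthis
          rw [eq1, eq2]
          exact star (fun s : {s : Fin n // s ≠ kk} =>
            if h : s.1 ∈ T' then (a s.1, b s.1) else x ⟨s.1, h⟩)
        -- assemble
        set T0 : Finset (Fin n) := Finset.univ.filter (fun s => s.val < k + 1) with hT0def
        have hT0mem : ∀ s : Fin n, s ∈ T0 ↔ s.val < k + 1 := by
          intro s; rw [hT0def]; simp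
        have hmT := main T hT
        have hmT0 := main T0 (fun s hs => (hT0mem s).mpr hs)
        have hFset : {ω : Ω | (∀ s ∈ T0, A s ω = a s ∧ B s ω = b s) ∧
            ∀ s : Fin n, s.val < k + 1 → C s ω = c s}
            = {ω : Ω | ∀ s : Fin n, s.val < k + 1 →
              A s ω = a s ∧ B s ω = b s ∧ C s ω = c s} := by
          ext ω
          simp only [Set.mem_setOf_eq]
          constructor
          · rintro ⟨h1, h2⟩ s hs
            exact ⟨(h1 s ((hT0mem s).mpr hs)).1, (h1 s ((hT0mem s).mpr hs)).2, h2 s hs⟩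
          · intro h
            exact ⟨fun s hs => ⟨(h s ((hT0mem s).mp hs)).1, (h s ((hT0mem s).mp hs)).2.1⟩,
              fun s hs => (h s hs).2.2⟩
        rw [hFset] at hmT0
        have ihT := ih T (fun s hs => hT s (by omega))
        have ihT0 := ih T0 (fun s hs => (hT0mem s).mpr (by omega))
        have hT0f : T0.filter (fun s => k ≤ s.val) = {kk} := by
          ext s
          simp only [Finset.mem_filter, Finset.mem_singleton, hT0mem]
          constructor
          · rintro ⟨h1, h2⟩
            have hkv : kk.val = k := rfl
            exact Fin.ext (by omega)
          · rintro rfl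
            exact ⟨Nat.lt_succ_self k, le_refl k⟩
        rw [hT0f, Finset.prod_singleton] at ihT0
        rw [ihT0] at hmT0
        have hsplit : T.filter (fun s => k ≤ s.val)
            = insert kk (T.filter (fun s => k + 1 ≤ s.val)) := by
          ext s
          simp only [Finset.mem_filter, Finset.mem_insert]
          constructor
          · rintro ⟨h1, h2⟩
            rcases Nat.eq_or_lt_of_le h2 with h | h
            · exact Or.inl (Fin.ext h.symm)
            · exact Or.inr ⟨h1, h⟩
          · rintro (rfl | ⟨h1, h2⟩)
            · exact ⟨hkkT, le_refl k⟩
            · exact ⟨h1, by omega⟩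
        have hnm : kk ∉ T.filter (fun s => k + 1 ≤ s.val) := by
          simp only [Finset.mem_filter]
          rintro ⟨-, h⟩
          have : kk.val = k := rfl
          omega
        rw [ihT, hsplit, Finset.prod_insert hnm] at hmT
        apply mul_right_cancel₀ (ne_of_gt hWpos)
        linear_combination hmT - (∏ s ∈ T.filter (fun s => k + 1 ≤ s.val),
            (μ {ω | A s ω = a s ∧ B s ω = b s}).toReal) * hmT0
    · -- k ≥ n : both conditions coincide with level k
      have e1 : {ω : Ω | (∀ s ∈ T, A s ω = a s ∧ B s ω = b s) ∧
          ∀ s : Fin n, s.val < k + 1 → C s ω = c s}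
          = {ω : Ω | (∀ s ∈ T, A s ω = a s ∧ B s ω = b s) ∧
          ∀ s : Fin n, s.val < k → C s ω = c s} := by
        ext ω
        simp only [Set.mem_setOf_eq, and_congr_right_iff]
        intro _
        constructor <;> intro h s hs <;> exact h s (by omega)
      have e2 : {ω : Ω | ∀ s : Fin n, s.val < k + 1 → A s ω = a s ∧ B s ω = b s ∧ C s ω = c s}
          = {ω : Ω | ∀ s : Fin n, s.val < k → A s ω = a s ∧ B s ω = b s ∧ C s ω = c s} := by
        ext ω
        simp only [Set.mem_setOf_eq]
        constructor <;> intro h s hs <;> exact h s (by omega)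
      have e3 : T.filter (fun s => k + 1 ≤ s.val) = T.filter (fun s => k ≤ s.val) := by
        apply Finset.filter_congr
        intro s _
        have := s.isLt
        constructor <;> (intro; omega)
      rw [e1, e2, e3]
      exact ih T (fun s hs => hT s (by omega))

variable {Ω : Type*} [MeasurableSpace Ω] {n : ℕ}
  {𝔄 𝔅 ℭ 𝔇 : Fin n → Type*}
  [∀ t, Fintype (𝔄 t)] [∀ t, Fintype (𝔅 t)] [∀ t, Fintype (ℭ t)] [∀ t, Fintype (𝔇 t)]

/-- under (i) mutual independence of the pairs `(A_t, B_t)`,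
(ii) `B^n — (A^n, C^n) — D^n`, and (iii) `C_t — (A_t, B_t, C^{t-1}) — (A^{n∖t}, B^{n∖t})`,
the vector `(A^t, B^t, C^t)` is independent of `(A_{t+1}^n, B_{t+1}^n)` for each `t`. -/
theorem stmt10 (μ : Measure Ω) [IsProbabilityMeasure μ]
    (A : ∀ t, Ω → 𝔄 t) (B : ∀ t, Ω → 𝔅 t) (C : ∀ t, Ω → ℭ t) (D : ∀ t, Ω → 𝔇 t)
    (hAm : ∀ t a, MeasurableSet {ω | A t ω = a})
    (hBm : ∀ t b, MeasurableSet {ω | B t ω = b})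
    (hCm : ∀ t c, MeasurableSet {ω | C t ω = c})
    (hDm : ∀ t d, MeasurableSet {ω | D t ω = d})
    (hi : ∀ (T : Finset (Fin n)) (ab : ∀ t, 𝔄 t × 𝔅 t),
      (μ {ω | ∀ t ∈ T, (A t ω, B t ω) = ab t}).toReal =
        ∏ t ∈ T, (μ {ω | (A t ω, B t ω) = ab t}).toReal)
    (hii : CondIndepRV μ (fun ω (t : Fin n) => B t ω) (fun ω (t : Fin n) => D t ω)
      (fun ω => ((fun t => A t ω), (fun t => C t ω))))
    (hiii : ∀ t : Fin n, CondIndepRV μ (C t)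
      (fun ω => fun s : {s : Fin n // s ≠ t} => (A s.1 ω, B s.1 ω))
      (fun ω => (A t ω, B t ω, fun s : {s : Fin n // s < t} => C s.1 ω))) :
    ∀ t : Fin n, IndepRV μ
      (fun ω => fun s : {s : Fin n // s ≤ t} => (A s.1 ω, B s.1 ω, C s.1 ω))
      (fun ω => fun s : {s : Fin n // t < s.1} => (A s.1 ω, B s.1 ω)) := by
  intro t u v
  have hne : Nonempty Ω := by
    by_contra h
    rw [not_nonempty_iff] at h
    have h1 : μ Set.univ = 1 := measure_univ
    rw [Set.univ_eq_empty_iff.mpr h, measure_empty] at h1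
    exact zero_ne_one h1
  have hCne : ∀ s : Fin n, Nonempty (ℭ s) := fun s => ⟨C s (Classical.arbitrary Ω)⟩
  classical
  set a : ∀ s, 𝔄 s :=
    fun s => if h : s ≤ t then (u ⟨s, h⟩).1 else (v ⟨s, lt_of_not_ge h⟩).1 with hadef
  set b : ∀ s, 𝔅 s :=
    fun s => if h : s ≤ t then (u ⟨s, h⟩).2.1 else (v ⟨s, lt_of_not_ge h⟩).2 with hbdef
  set c : ∀ s, ℭ s :=
    fun s => if h : s ≤ t then (u ⟨s, h⟩).2.2 else (hCne s).some with hcdef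
  have hau : ∀ (s : Fin n) (h : s ≤ t), a s = (u ⟨s, h⟩).1 := by
    intro s h; simp only [hadef]; rw [dif_pos h]
  have hbu : ∀ (s : Fin n) (h : s ≤ t), b s = (u ⟨s, h⟩).2.1 := by
    intro s h; simp only [hbdef]; rw [dif_pos h]
  have hcu : ∀ (s : Fin n) (h : s ≤ t), c s = (u ⟨s, h⟩).2.2 := by
    intro s h; simp only [hcdef]; rw [dif_pos h]
  have hav : ∀ (s : Fin n) (h : t < s), a s = (v ⟨s, h⟩).1 := by
    intro s h; simp only [hadef]; rw [dif_neg (not_le.mpr h)]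
  have hbv : ∀ (s : Fin n) (h : t < s), b s = (v ⟨s, h⟩).2 := by
    intro s h; simp only [hbdef]; rw [dif_neg (not_le.mpr h)]
  have hi' : ∀ T : Finset (Fin n), (μ {ω | ∀ s ∈ T, A s ω = a s ∧ B s ω = b s}).toReal =
      ∏ s ∈ T, (μ {ω | A s ω = a s ∧ B s ω = b s}).toReal := by
    intro T
    have h := hi T (fun s => (a s, b s))
    simpa only [Prod.mk.injEq] using h
  have hkey := key μ A B C hAm hBm hCm hi hiii a b c (t.val + 1) Finset.univ
    (fun s _ => Finset.mem_univ s)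
  have S1 : {ω : Ω | (fun s : {s : Fin n // s ≤ t} => (A s.1 ω, B s.1 ω, C s.1 ω)) = u ∧
      (fun s : {s : Fin n // t < s.1} => (A s.1 ω, B s.1 ω)) = v}
      = {ω : Ω | (∀ s ∈ Finset.univ, A s ω = a s ∧ B s ω = b s) ∧
        ∀ s : Fin n, s.val < t.val + 1 → C s ω = c s} := by
    ext ω
    constructor
    · rintro ⟨hu, hv⟩
      constructor
      · intro s _
        by_cases h : s ≤ t
        · have hc := congrFun hu ⟨s, h⟩
          rw [hau s h, hbu s h]
          exact ⟨congrArg (fun p => p.1) hc, congrArg (fun p => p.2.1) hc⟩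
        · have h' : t < s := lt_of_not_ge h
          have hc := congrFun hv ⟨s, h'⟩
          rw [hav s h', hbv s h']
          exact ⟨congrArg (fun p => p.1) hc, congrArg (fun p => p.2) hc⟩
      · intro s hs
        have h : s ≤ t := by
          have : s.val ≤ t.val := by omega
          exact this
        have hc := congrFun hu ⟨s, h⟩
        rw [hcu s h]
        exact congrArg (fun p => p.2.2) hc
    · rintro ⟨hAB, hC⟩
      constructor
      · funext s
        have h1 := hAB s.1 (Finset.mem_univ s.1)
        have h2 := hC s.1 (by have : s.1.val ≤ t.val := s.2; omega)
        rw [h1.1, h1.2, h2, hau s.1 s.2, hbu s.1 s.2, hcu s.1 s.2]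
      · funext s
        have h1 := hAB s.1 (Finset.mem_univ s.1)
        rw [h1.1, h1.2, hav s.1 s.2, hbv s.1 s.2]
  have S2 : {ω : Ω | (fun s : {s : Fin n // s ≤ t} => (A s.1 ω, B s.1 ω, C s.1 ω)) = u}
      = {ω : Ω | ∀ s : Fin n, s.val < t.val + 1 →
        A s ω = a s ∧ B s ω = b s ∧ C s ω = c s} := by
    ext ω
    constructor
    · intro hu s hs
      have h : s ≤ t := by
        have : s.val ≤ t.val := by omega
        exact this
      have hc := congrFun hu ⟨s, h⟩
      rw [hau s h, hbu s h, hcu s h]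
      exact ⟨congrArg (fun p => p.1) hc, congrArg (fun p => p.2.1) hc,
        congrArg (fun p => p.2.2) hc⟩
    · intro h
      funext s
      have hs : s.1.val < t.val + 1 := by have : s.1.val ≤ t.val := s.2; omega
      have h1 := h s.1 hs
      rw [h1.1, h1.2.1, h1.2.2, hau s.1 s.2, hbu s.1 s.2, hcu s.1 s.2]
  have S3 : {ω : Ω | (fun s : {s : Fin n // t < s.1} => (A s.1 ω, B s.1 ω)) = v}
      = {ω : Ω | ∀ s ∈ Finset.univ.filter (fun s : Fin n => t.val + 1 ≤ s.val),
        A s ω = a s ∧ B s ω = b s} := by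
    ext ω
    constructor
    · intro hv s hs
      have h : t < s := by
        rw [Finset.mem_filter] at hs
        have : t.val < s.val := by omega
        exact this
      have hc := congrFun hv ⟨s, h⟩
      rw [hav s h, hbv s h]
      exact ⟨congrArg (fun p => p.1) hc, congrArg (fun p => p.2) hc⟩
    · intro h
      funext s
      have hs : s.1 ∈ Finset.univ.filter (fun s : Fin n => t.val + 1 ≤ s.val) := by
        rw [Finset.mem_filter]
        have : t.val < s.1.val := s.2
        exact ⟨Finset.mem_univ _, by omega⟩
      have h1 := h s.1 hs
      rw [h1.1, h1.2, hav s.1 s.2, hbv s.1 s.2]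
  show (μ {ω : Ω | (fun s : {s : Fin n // s ≤ t} => (A s.1 ω, B s.1 ω, C s.1 ω)) = u ∧
      (fun s : {s : Fin n // t < s.1} => (A s.1 ω, B s.1 ω)) = v}).toReal
    = (μ {ω : Ω | (fun s : {s : Fin n // s ≤ t} => (A s.1 ω, B s.1 ω, C s.1 ω)) = u}).toReal
      * (μ {ω : Ω | (fun s : {s : Fin n // t < s.1} => (A s.1 ω, B s.1 ω)) = v}).toReal
  rw [S1, S2, S3, hkey, hi']
end
end

section
/- Under hypotheses (i)–(iii), for every t = 1, …, n the pair (A_t, B_t) is conditionally independent of the random vector (A^{n∖t}, B^{n∖t}, C_{t+1}^n) given C^t. -/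
open MeasureTheory

noncomputable section

section Helpers

lemma ratio_to_prod' {x y1 y2 z : ℝ} (hz : 0 < z) (h : x / z = y1 / z * (y2 / z)) :
    x * z = y1 * y2 := by
  have hz' : z ≠ 0 := ne_of_gt hz
  field_simp at h
  nlinarith [h]

lemma meas_partition' {Ω' α : Type*} [MeasurableSpace Ω'] [Fintype α]
    (μ : Measure Ω') [IsProbabilityMeasure μ] (s : Set Ω') (f : Ω' → α)
    (h : ∀ x, MeasurableSet (s ∩ f ⁻¹' {x})) :
    (μ s).toReal = ∑ x, (μ (s ∩ f ⁻¹' {x})).toReal := by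
  have hs : s = ⋃ x ∈ (Finset.univ : Finset α), s ∩ f ⁻¹' {x} := by
    ext ω; simp
  have key : μ s = ∑ x, μ (s ∩ f ⁻¹' {x}) := by
    conv_lhs => rw [hs]
    rw [measure_biUnion_finset ?_ (fun x _ => h x)]
    intro x _ y _ hxy
    simp only [Function.onFun]
    apply Set.disjoint_left.mpr
    rintro ω ⟨_, hx⟩ ⟨_, hy⟩
    simp only [Set.mem_preimage, Set.mem_singleton_iff] at hx hy
    exact hxy (hx ▸ hy)
  rw [key, ENNReal.toReal_sum (fun x _ => measure_ne_top μ _)]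

lemma toReal_mono_meas' {Ω' : Type*} [MeasurableSpace Ω'] (μ : Measure Ω')
    [IsProbabilityMeasure μ] {s t : Set Ω'} (h : s ⊆ t) :
    (μ s).toReal ≤ (μ t).toReal :=
  ENNReal.toReal_mono (measure_ne_top μ t) (measure_mono h)

lemma condindep_of_cross' {α β : Type*} [Fintype α] [Fintype β] (J : α → β → ℝ)
    (X Y1 Y2 Z : ℝ) (u : α) (v : β)
    (hcross : ∀ u1 v1 u2 v2, J u1 v1 * J u2 v2 = J u1 v2 * J u2 v1)
    (hX : X = J u v)
    (hY1 : Y1 = ∑ v', J u v') (hY2 : Y2 = ∑ u', J u' v)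
    (hZ : Z = ∑ u', ∑ v', J u' v') (hpos : 0 < Z) :
    X / Z = Y1 / Z * (Y2 / Z) := by
  have key : X * Z = Y1 * Y2 := by
    calc X * Z = ∑ u', ∑ v', J u v * J u' v' := by
          rw [hX, hZ, Finset.mul_sum]
          exact Finset.sum_congr rfl fun u' _ => Finset.mul_sum _ _ _
      _ = ∑ u', ∑ v', J u v' * J u' v :=
          Finset.sum_congr rfl fun u' _ => Finset.sum_congr rfl fun v' _ => hcross u v u' v'
      _ = ∑ u', (∑ v', J u v') * J u' v :=
          Finset.sum_congr rfl fun u' _ => (Finset.sum_mul _ _ _).symm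
      _ = Y1 * Y2 := by rw [hY1, hY2, ← Finset.mul_sum]
  have hz' : Z ≠ 0 := ne_of_gt hpos
  field_simp
  nlinarith [key]

end Helpers

variable {Ω : Type*} [MeasurableSpace Ω] {n : ℕ}
  {𝔄 𝔅 ℭ 𝔇 : Fin n → Type*}
  [∀ t, Fintype (𝔄 t)] [∀ t, Fintype (𝔅 t)] [∀ t, Fintype (ℭ t)] [∀ t, Fintype (𝔇 t)]

section Aux

/-- `μ(A^n = a, B^n = b, C_s = c_s for all s)` -/
def RnP (μ : Measure Ω) (A : ∀ t, Ω → 𝔄 t) (B : ∀ t, Ω → 𝔅 t) (C : ∀ t, Ω → ℭ t)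
    (a : ∀ s, 𝔄 s) (b : ∀ s, 𝔅 s) (c : ∀ s, ℭ s) : ℝ :=
  (μ {ω | (∀ s, A s ω = a s ∧ B s ω = b s) ∧ ∀ s : Fin n, (s : ℕ) < n → C s ω = c s}).toReal

/-- `μ(A_s = a_s, B_s = b_s, C_j = c_j for j ≤ s)` -/
def rP (μ : Measure Ω) (A : ∀ t, Ω → 𝔄 t) (B : ∀ t, Ω → 𝔅 t) (C : ∀ t, Ω → ℭ t)
    (a : ∀ s, 𝔄 s) (b : ∀ s, 𝔅 s) (c : ∀ s, ℭ s) (s : Fin n) : ℝ :=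
  (μ {ω | A s ω = a s ∧ B s ω = b s ∧ ∀ j : Fin n, (j : ℕ) ≤ (s : ℕ) → C j ω = c j}).toReal

/-- `μ(A_s = a_s, B_s = b_s, C_j = c_j for j < s)` -/
def rP' (μ : Measure Ω) (A : ∀ t, Ω → 𝔄 t) (B : ∀ t, Ω → 𝔅 t) (C : ∀ t, Ω → ℭ t)
    (a : ∀ s, 𝔄 s) (b : ∀ s, 𝔅 s) (c : ∀ s, ℭ s) (s : Fin n) : ℝ :=
  (μ {ω | A s ω = a s ∧ B s ω = b s ∧ ∀ j : Fin n, (j : ℕ) < (s : ℕ) → C j ω = c j}).toReal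

/-- `μ(A_s = a_s, B_s = b_s)` -/
def pP (μ : Measure Ω) (A : ∀ t, Ω → 𝔄 t) (B : ∀ t, Ω → 𝔅 t)
    (a : ∀ s, 𝔄 s) (b : ∀ s, 𝔅 s) (s : Fin n) : ℝ :=
  (μ {ω | (A s ω, B s ω) = (a s, b s)}).toReal

lemma star (μ : Measure Ω) [IsProbabilityMeasure μ]
    (A : ∀ t, Ω → 𝔄 t) (B : ∀ t, Ω → 𝔅 t) (C : ∀ t, Ω → ℭ t)
    (hiii : ∀ t : Fin n, CondIndepRV μ (C t)
      (fun ω => fun s : {s : Fin n // s ≠ t} => (A s.1 ω, B s.1 ω))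
      (fun ω => (A t ω, B t ω, fun s : {s : Fin n // s < t} => C s.1 ω)))
    (a : ∀ s, 𝔄 s) (b : ∀ s, 𝔅 s) (c : ∀ s, ℭ s) (m : ℕ) :
    (μ {ω | (∀ s, A s ω = a s ∧ B s ω = b s) ∧ ∀ s : Fin n, (s : ℕ) < m → C s ω = c s}).toReal
      * ∏ s ∈ Finset.univ.filter (fun s : Fin n => (s : ℕ) < m),
          (μ {ω | A s ω = a s ∧ B s ω = b s ∧ ∀ j : Fin n, (j:ℕ) < (s:ℕ) → C j ω = c j}).toReal
    = (μ {ω | ∀ s, A s ω = a s ∧ B s ω = b s}).toReal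
      * ∏ s ∈ Finset.univ.filter (fun s : Fin n => (s : ℕ) < m),
          (μ {ω | A s ω = a s ∧ B s ω = b s ∧ ∀ j : Fin n, (j:ℕ) ≤ (s:ℕ) → C j ω = c j}).toReal := by
  induction m with
  | zero =>
    have h0 : {ω | (∀ s, A s ω = a s ∧ B s ω = b s) ∧ ∀ s : Fin n, (s : ℕ) < 0 → C s ω = c s}
        = {ω | ∀ s, A s ω = a s ∧ B s ω = b s} := by
      ext ω; simp
    rw [h0]
    simp
  | succ m ih =>
    by_cases hm : m < n
    · set τ : Fin n := ⟨m, hm⟩ with hτdef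
      have hτv : (τ : ℕ) = m := rfl
      have hfil : Finset.univ.filter (fun s : Fin n => (s : ℕ) < m + 1)
          = insert τ (Finset.univ.filter (fun s : Fin n => (s : ℕ) < m)) := by
        ext s
        simp only [Finset.mem_filter, Finset.mem_insert, Finset.mem_univ, true_and, Fin.ext_iff]
        omega
      have hτnot : τ ∉ Finset.univ.filter (fun s : Fin n => (s : ℕ) < m) := by simp [hτv]
      rw [hfil, Finset.prod_insert hτnot, Finset.prod_insert hτnot]
      have hstep :
          (μ {ω | (∀ s, A s ω = a s ∧ B s ω = b s) ∧ ∀ s : Fin n, (s : ℕ) < m + 1 → C s ω = c s}).toReal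
            * (μ {ω | A τ ω = a τ ∧ B τ ω = b τ ∧ ∀ j : Fin n, (j:ℕ) < (τ:ℕ) → C j ω = c j}).toReal
          = (μ {ω | A τ ω = a τ ∧ B τ ω = b τ ∧ ∀ j : Fin n, (j:ℕ) ≤ (τ:ℕ) → C j ω = c j}).toReal
            * (μ {ω | (∀ s, A s ω = a s ∧ B s ω = b s) ∧ ∀ s : Fin n, (s : ℕ) < m → C s ω = c s}).toReal := by
        have h := hiii τ (c τ) (fun s : {s : Fin n // s ≠ τ} => (a s.1, b s.1))
            (a τ, b τ, fun s : {s : Fin n // s < τ} => c s.1)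
        beta_reduce at h
        have hSz : {ω | (A τ ω, B τ ω, fun s : {s : Fin n // s < τ} => C s.1 ω)
              = (a τ, b τ, fun s : {s : Fin n // s < τ} => c s.1)}
            = {ω | A τ ω = a τ ∧ B τ ω = b τ ∧ ∀ j : Fin n, (j:ℕ) < (τ:ℕ) → C j ω = c j} := by
          ext ω
          simp only [Set.mem_setOf_eq, Prod.mk.injEq, funext_iff, Subtype.forall, Fin.lt_def]
        have hSy1 : {ω | C τ ω = c τ ∧ (A τ ω, B τ ω, fun s : {s : Fin n // s < τ} => C s.1 ω)
              = (a τ, b τ, fun s : {s : Fin n // s < τ} => c s.1)}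
            = {ω | A τ ω = a τ ∧ B τ ω = b τ ∧ ∀ j : Fin n, (j:ℕ) ≤ (τ:ℕ) → C j ω = c j} := by
          ext ω
          simp only [Set.mem_setOf_eq, Prod.mk.injEq, funext_iff, Subtype.forall, Fin.lt_def]
          constructor
          · rintro ⟨hct, hA, hB, hC⟩
            refine ⟨hA, hB, fun j hj => ?_⟩
            rcases Nat.lt_or_ge (j : ℕ) m with hj' | hj'
            · exact hC j hj'
            · have : j = τ := Fin.ext (by omega)
              subst this; exact hct
          · rintro ⟨hA, hB, hC⟩
            exact ⟨hC τ (le_refl m), hA, hB, fun j hj => hC j (Nat.le_of_lt hj)⟩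
        have hSy2 : {ω | (fun s : {s : Fin n // s ≠ τ} => (A s.1 ω, B s.1 ω))
              = (fun s : {s : Fin n // s ≠ τ} => (a s.1, b s.1))
            ∧ (A τ ω, B τ ω, fun s : {s : Fin n // s < τ} => C s.1 ω)
              = (a τ, b τ, fun s : {s : Fin n // s < τ} => c s.1)}
            = {ω | (∀ s, A s ω = a s ∧ B s ω = b s) ∧ ∀ s : Fin n, (s : ℕ) < m → C s ω = c s} := by
          ext ω
          simp only [Set.mem_setOf_eq, Prod.mk.injEq, funext_iff, Subtype.forall, Fin.lt_def]
          constructor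
          · rintro ⟨hV, hA, hB, hC⟩
            refine ⟨fun s => ?_, hC⟩
            by_cases hs : s = τ
            · subst hs; exact ⟨hA, hB⟩
            · exact hV s hs
          · rintro ⟨hAB, hC⟩
            exact ⟨fun s _ => hAB s, (hAB τ).1, (hAB τ).2, hC⟩
        have hSx : {ω | C τ ω = c τ
            ∧ (fun s : {s : Fin n // s ≠ τ} => (A s.1 ω, B s.1 ω))
              = (fun s : {s : Fin n // s ≠ τ} => (a s.1, b s.1))
            ∧ (A τ ω, B τ ω, fun s : {s : Fin n // s < τ} => C s.1 ω)
              = (a τ, b τ, fun s : {s : Fin n // s < τ} => c s.1)}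
            = {ω | (∀ s, A s ω = a s ∧ B s ω = b s) ∧ ∀ s : Fin n, (s : ℕ) < m + 1 → C s ω = c s} := by
          ext ω
          simp only [Set.mem_setOf_eq, Prod.mk.injEq, funext_iff, Subtype.forall, Fin.lt_def]
          constructor
          · rintro ⟨hct, hV, hA, hB, hC⟩
            refine ⟨fun s => ?_, fun s hs => ?_⟩
            · by_cases hs : s = τ
              · subst hs; exact ⟨hA, hB⟩
              · exact hV s hs
            · rcases Nat.lt_or_ge (s : ℕ) m with hs' | hs'
              · exact hC s hs'
              · have : s = τ := Fin.ext (by omega)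
                subst this; exact hct
          · rintro ⟨hAB, hC⟩
            exact ⟨hC τ (by omega), fun s _ => hAB s, (hAB τ).1, (hAB τ).2,
              fun s hs => hC s (by omega)⟩
        rw [hSz, hSy1, hSy2, hSx] at h
        by_cases hz : 0 < (μ {ω | A τ ω = a τ ∧ B τ ω = b τ
            ∧ ∀ j : Fin n, (j:ℕ) < (τ:ℕ) → C j ω = c j}).toReal
        · exact ratio_to_prod' hz (h hz)
        · have hz0 : (μ {ω | A τ ω = a τ ∧ B τ ω = b τ
              ∧ ∀ j : Fin n, (j:ℕ) < (τ:ℕ) → C j ω = c j}).toReal = 0 :=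
            le_antisymm (not_lt.mp hz) ENNReal.toReal_nonneg
          have hy1 : (μ {ω | A τ ω = a τ ∧ B τ ω = b τ
              ∧ ∀ j : Fin n, (j:ℕ) ≤ (τ:ℕ) → C j ω = c j}).toReal = 0 := by
            refine le_antisymm (le_trans (toReal_mono_meas' μ ?_) (le_of_eq hz0))
              ENNReal.toReal_nonneg
            rintro ω ⟨hA, hB, hC⟩
            exact ⟨hA, hB, fun j hj => hC j (Nat.le_of_lt hj)⟩
          rw [hz0, hy1, mul_zero, zero_mul]
      linear_combination
        (∏ s ∈ Finset.univ.filter (fun s : Fin n => (s : ℕ) < m),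
          (μ {ω | A s ω = a s ∧ B s ω = b s ∧ ∀ j : Fin n, (j:ℕ) < (s:ℕ) → C j ω = c j}).toReal)
            * hstep
        + (μ {ω | A τ ω = a τ ∧ B τ ω = b τ
            ∧ ∀ j : Fin n, (j:ℕ) ≤ (τ:ℕ) → C j ω = c j}).toReal * ih
    · have hfil : Finset.univ.filter (fun s : Fin n => (s : ℕ) < m + 1)
          = Finset.univ.filter (fun s : Fin n => (s : ℕ) < m) := by
        ext s
        simp only [Finset.mem_filter, Finset.mem_univ, true_and]
        have := s.isLt
        omega
      have hset : {ω | (∀ s, A s ω = a s ∧ B s ω = b s) ∧ ∀ s : Fin n, (s : ℕ) < m + 1 → C s ω = c s}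
          = {ω | (∀ s, A s ω = a s ∧ B s ω = b s) ∧ ∀ s : Fin n, (s : ℕ) < m → C s ω = c s} := by
        ext ω
        simp only [Set.mem_setOf_eq, and_congr_right_iff]
        intro _
        constructor <;> intro h s hs <;> exact h s (by omega)
      rw [hfil, hset]
      exact ih

lemma master (μ : Measure Ω) [IsProbabilityMeasure μ]
    (A : ∀ t, Ω → 𝔄 t) (B : ∀ t, Ω → 𝔅 t) (C : ∀ t, Ω → ℭ t)
    (hi : ∀ (T : Finset (Fin n)) (ab : ∀ t, 𝔄 t × 𝔅 t),
      (μ {ω | ∀ t ∈ T, (A t ω, B t ω) = ab t}).toReal =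
        ∏ t ∈ T, (μ {ω | (A t ω, B t ω) = ab t}).toReal)
    (hiii : ∀ t : Fin n, CondIndepRV μ (C t)
      (fun ω => fun s : {s : Fin n // s ≠ t} => (A s.1 ω, B s.1 ω))
      (fun ω => (A t ω, B t ω, fun s : {s : Fin n // s < t} => C s.1 ω)))
    (a : ∀ s, 𝔄 s) (b : ∀ s, 𝔅 s) (c : ∀ s, ℭ s) :
    RnP μ A B C a b c * ∏ s, rP' μ A B C a b c s
      = ∏ s, (pP μ A B a b s * rP μ A B C a b c s) := by
  have h := star μ A B C hiii a b c n
  have hfil : Finset.univ.filter (fun s : Fin n => (s : ℕ) < n) = Finset.univ :=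
    Finset.filter_true_of_mem (fun s _ => s.isLt)
  rw [hfil] at h
  have hR0 : (μ {ω | ∀ s, A s ω = a s ∧ B s ω = b s}).toReal = ∏ s, pP μ A B a b s := by
    have h2 := hi Finset.univ (fun s => (a s, b s))
    have hset : {ω | ∀ s ∈ Finset.univ, (A s ω, B s ω) = ((fun s => (a s, b s)) s)}
        = {ω | ∀ s, A s ω = a s ∧ B s ω = b s} := by
      ext ω
      simp [Prod.ext_iff]
    rw [hset] at h2
    exact h2
  rw [hR0] at h
  rw [Finset.prod_mul_distrib]
  exact h

lemma Jle (μ : Measure Ω) [IsProbabilityMeasure μ]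
    (A : ∀ t, Ω → 𝔄 t) (B : ∀ t, Ω → 𝔅 t) (C : ∀ t, Ω → ℭ t)
    (a : ∀ s, 𝔄 s) (b : ∀ s, 𝔅 s) (c : ∀ s, ℭ s) (s : Fin n) :
    RnP μ A B C a b c ≤ rP' μ A B C a b c s := by
  apply toReal_mono_meas' μ
  rintro ω ⟨hAB, hC⟩
  exact ⟨(hAB s).1, (hAB s).2, fun j hj => hC j (lt_trans hj s.isLt)⟩

lemma RnP_nonneg (μ : Measure Ω) (A : ∀ t, Ω → 𝔄 t) (B : ∀ t, Ω → 𝔅 t) (C : ∀ t, Ω → ℭ t)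
    (a : ∀ s, 𝔄 s) (b : ∀ s, 𝔅 s) (c : ∀ s, ℭ s) : 0 ≤ RnP μ A B C a b c :=
  ENNReal.toReal_nonneg

end Aux

section Cross

set_option linter.unusedSectionVars false

lemma rP_congr (μ : Measure Ω) (A : ∀ t, Ω → 𝔄 t) (B : ∀ t, Ω → 𝔅 t) (C : ∀ t, Ω → ℭ t)
    {a a' : ∀ s, 𝔄 s} {b b' : ∀ s, 𝔅 s} {c c' : ∀ s, ℭ s} {s : Fin n}
    (ha : a s = a' s) (hb : b s = b' s)
    (hc : ∀ j : Fin n, (j : ℕ) ≤ (s : ℕ) → c j = c' j) :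
    rP μ A B C a b c s = rP μ A B C a' b' c' s := by
  unfold rP
  have hset : {ω | A s ω = a s ∧ B s ω = b s ∧ ∀ j : Fin n, (j : ℕ) ≤ (s : ℕ) → C j ω = c j}
      = {ω | A s ω = a' s ∧ B s ω = b' s ∧ ∀ j : Fin n, (j : ℕ) ≤ (s : ℕ) → C j ω = c' j} := by
    ext ω
    simp only [Set.mem_setOf_eq, ha, hb]
    constructor <;> rintro ⟨hA, hB, hC⟩ <;>
      exact ⟨hA, hB, fun j hj => by
        have := hc j hj
        first
          | exact this ▸ hC j hj
          | exact this.symm ▸ hC j hj⟩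
  rw [hset]

lemma rP'_congr (μ : Measure Ω) (A : ∀ t, Ω → 𝔄 t) (B : ∀ t, Ω → 𝔅 t) (C : ∀ t, Ω → ℭ t)
    {a a' : ∀ s, 𝔄 s} {b b' : ∀ s, 𝔅 s} {c c' : ∀ s, ℭ s} {s : Fin n}
    (ha : a s = a' s) (hb : b s = b' s)
    (hc : ∀ j : Fin n, (j : ℕ) < (s : ℕ) → c j = c' j) :
    rP' μ A B C a b c s = rP' μ A B C a' b' c' s := by
  unfold rP'
  have hset : {ω | A s ω = a s ∧ B s ω = b s ∧ ∀ j : Fin n, (j : ℕ) < (s : ℕ) → C j ω = c j}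
      = {ω | A s ω = a' s ∧ B s ω = b' s ∧ ∀ j : Fin n, (j : ℕ) < (s : ℕ) → C j ω = c' j} := by
    ext ω
    simp only [Set.mem_setOf_eq, ha, hb]
    constructor <;> rintro ⟨hA, hB, hC⟩ <;>
      exact ⟨hA, hB, fun j hj => by
        have := hc j hj
        first
          | exact this ▸ hC j hj
          | exact this.symm ▸ hC j hj⟩
  rw [hset]

lemma pP_congr (μ : Measure Ω) (A : ∀ t, Ω → 𝔄 t) (B : ∀ t, Ω → 𝔅 t)
    {a a' : ∀ s, 𝔄 s} {b b' : ∀ s, 𝔅 s} {s : Fin n}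
    (ha : a s = a' s) (hb : b s = b' s) :
    pP μ A B a b s = pP μ A B a' b' s := by
  unfold pP
  rw [ha, hb]

lemma cross (μ : Measure Ω) [IsProbabilityMeasure μ]
    (A : ∀ t, Ω → 𝔄 t) (B : ∀ t, Ω → 𝔅 t) (C : ∀ t, Ω → ℭ t)
    (hi : ∀ (T : Finset (Fin n)) (ab : ∀ t, 𝔄 t × 𝔅 t),
      (μ {ω | ∀ t ∈ T, (A t ω, B t ω) = ab t}).toReal =
        ∏ t ∈ T, (μ {ω | (A t ω, B t ω) = ab t}).toReal)
    (hiii : ∀ t : Fin n, CondIndepRV μ (C t)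
      (fun ω => fun s : {s : Fin n // s ≠ t} => (A s.1 ω, B s.1 ω))
      (fun ω => (A t ω, B t ω, fun s : {s : Fin n // s < t} => C s.1 ω)))
    (t : Fin n) (a₁ a₂ : ∀ s, 𝔄 s) (b₁ b₂ : ∀ s, 𝔅 s) (c₁ c₂ : ∀ s, ℭ s)
    (hc : ∀ j : Fin n, (j : ℕ) ≤ (t : ℕ) → c₁ j = c₂ j) :
    RnP μ A B C a₁ b₁ c₁ * RnP μ A B C a₂ b₂ c₂
      = RnP μ A B C (Function.update a₂ t (a₁ t)) (Function.update b₂ t (b₁ t)) c₂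
        * RnP μ A B C (Function.update a₁ t (a₂ t)) (Function.update b₁ t (b₂ t)) c₁ := by
  classical
  set J11 := RnP μ A B C a₁ b₁ c₁ with hJ11
  set J22 := RnP μ A B C a₂ b₂ c₂ with hJ22
  set J12 := RnP μ A B C (Function.update a₂ t (a₁ t)) (Function.update b₂ t (b₁ t)) c₂ with hJ12
  set J21 := RnP μ A B C (Function.update a₁ t (a₂ t)) (Function.update b₁ t (b₂ t)) c₁ with hJ21
  set P1 := pP μ A B a₁ b₁ t with hP1
  set P2 := pP μ A B a₂ b₂ t with hP2
  set R1 := rP μ A B C a₁ b₁ c₁ t with hR1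
  set R2 := rP μ A B C a₂ b₂ c₂ t with hR2
  set R1' := rP' μ A B C a₁ b₁ c₁ t with hR1'
  set R2' := rP' μ A B C a₂ b₂ c₂ t with hR2'
  set Q1 := ∏ s ∈ Finset.univ.erase t, (pP μ A B a₁ b₁ s * rP μ A B C a₁ b₁ c₁ s) with hQ1
  set Q2 := ∏ s ∈ Finset.univ.erase t, (pP μ A B a₂ b₂ s * rP μ A B C a₂ b₂ c₂ s) with hQ2
  set Q1' := ∏ s ∈ Finset.univ.erase t, rP' μ A B C a₁ b₁ c₁ s with hQ1'
  set Q2' := ∏ s ∈ Finset.univ.erase t, rP' μ A B C a₂ b₂ c₂ s with hQ2'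
  -- equalities of the mixed-configuration factors
  have hP12 : pP μ A B (Function.update a₂ t (a₁ t)) (Function.update b₂ t (b₁ t)) t = P1 :=
    pP_congr μ A B (Function.update_self t (a₁ t) a₂) (Function.update_self t (b₁ t) b₂)
  have hR12 : rP μ A B C (Function.update a₂ t (a₁ t)) (Function.update b₂ t (b₁ t)) c₂ t = R1 :=
    rP_congr μ A B C (Function.update_self t (a₁ t) a₂) (Function.update_self t (b₁ t) b₂)
      (fun j hj => (hc j hj).symm)
  have hR12' : rP' μ A B C (Function.update a₂ t (a₁ t)) (Function.update b₂ t (b₁ t)) c₂ t = R1' :=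
    rP'_congr μ A B C (Function.update_self t (a₁ t) a₂) (Function.update_self t (b₁ t) b₂)
      (fun j hj => (hc j (Nat.le_of_lt hj)).symm)
  have hP21 : pP μ A B (Function.update a₁ t (a₂ t)) (Function.update b₁ t (b₂ t)) t = P2 :=
    pP_congr μ A B (Function.update_self t (a₂ t) a₁) (Function.update_self t (b₂ t) b₁)
  have hR21 : rP μ A B C (Function.update a₁ t (a₂ t)) (Function.update b₁ t (b₂ t)) c₁ t = R2 :=
    rP_congr μ A B C (Function.update_self t (a₂ t) a₁) (Function.update_self t (b₂ t) b₁)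
      (fun j hj => hc j hj)
  have hR21' : rP' μ A B C (Function.update a₁ t (a₂ t)) (Function.update b₁ t (b₂ t)) c₁ t = R2' :=
    rP'_congr μ A B C (Function.update_self t (a₂ t) a₁) (Function.update_self t (b₂ t) b₁)
      (fun j hj => hc j (Nat.le_of_lt hj))
  have hQ12 : ∏ s ∈ Finset.univ.erase t,
      (pP μ A B (Function.update a₂ t (a₁ t)) (Function.update b₂ t (b₁ t)) s
        * rP μ A B C (Function.update a₂ t (a₁ t)) (Function.update b₂ t (b₁ t)) c₂ s) = Q2 :=
    Finset.prod_congr rfl fun s hs => by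
      have hst : s ≠ t := Finset.ne_of_mem_erase hs
      rw [pP_congr μ A B (Function.update_of_ne hst _ _) (Function.update_of_ne hst _ _),
        rP_congr μ A B C (Function.update_of_ne hst _ _) (Function.update_of_ne hst _ _)
          (fun j _ => rfl)]
  have hQ12' : ∏ s ∈ Finset.univ.erase t,
      rP' μ A B C (Function.update a₂ t (a₁ t)) (Function.update b₂ t (b₁ t)) c₂ s = Q2' :=
    Finset.prod_congr rfl fun s hs => by
      have hst : s ≠ t := Finset.ne_of_mem_erase hs
      rw [rP'_congr μ A B C (Function.update_of_ne hst _ _) (Function.update_of_ne hst _ _)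
        (fun j _ => rfl)]
  have hQ21 : ∏ s ∈ Finset.univ.erase t,
      (pP μ A B (Function.update a₁ t (a₂ t)) (Function.update b₁ t (b₂ t)) s
        * rP μ A B C (Function.update a₁ t (a₂ t)) (Function.update b₁ t (b₂ t)) c₁ s) = Q1 :=
    Finset.prod_congr rfl fun s hs => by
      have hst : s ≠ t := Finset.ne_of_mem_erase hs
      rw [pP_congr μ A B (Function.update_of_ne hst _ _) (Function.update_of_ne hst _ _),
        rP_congr μ A B C (Function.update_of_ne hst _ _) (Function.update_of_ne hst _ _)
          (fun j _ => rfl)]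
  have hQ21' : ∏ s ∈ Finset.univ.erase t,
      rP' μ A B C (Function.update a₁ t (a₂ t)) (Function.update b₁ t (b₂ t)) c₁ s = Q1' :=
    Finset.prod_congr rfl fun s hs => by
      have hst : s ≠ t := Finset.ne_of_mem_erase hs
      rw [rP'_congr μ A B C (Function.update_of_ne hst _ _) (Function.update_of_ne hst _ _)
        (fun j _ => rfl)]
  -- the four master equations
  have E11 : J11 * (R1' * Q1') = (P1 * R1) * Q1 := by
    have h := master μ A B C hi hiii a₁ b₁ c₁
    rw [← Finset.mul_prod_erase Finset.univ _ (Finset.mem_univ t),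
      ← Finset.mul_prod_erase Finset.univ _ (Finset.mem_univ t)] at h
    linear_combination h
  have E22 : J22 * (R2' * Q2') = (P2 * R2) * Q2 := by
    have h := master μ A B C hi hiii a₂ b₂ c₂
    rw [← Finset.mul_prod_erase Finset.univ _ (Finset.mem_univ t),
      ← Finset.mul_prod_erase Finset.univ _ (Finset.mem_univ t)] at h
    linear_combination h
  have E12 : J12 * (R1' * Q2') = (P1 * R1) * Q2 := by
    have h := master μ A B C hi hiii (Function.update a₂ t (a₁ t)) (Function.update b₂ t (b₁ t)) c₂
    rw [← Finset.mul_prod_erase Finset.univ _ (Finset.mem_univ t),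
      ← Finset.mul_prod_erase Finset.univ _ (Finset.mem_univ t), hP12, hR12, hR12', hQ12, hQ12']
      at h
    linear_combination h
  have E21 : J21 * (R2' * Q1') = (P2 * R2) * Q1 := by
    have h := master μ A B C hi hiii (Function.update a₁ t (a₂ t)) (Function.update b₁ t (b₂ t)) c₁
    rw [← Finset.mul_prod_erase Finset.univ _ (Finset.mem_univ t),
      ← Finset.mul_prod_erase Finset.univ _ (Finset.mem_univ t), hP21, hR21, hR21', hQ21, hQ21']
      at h
    linear_combination h
  -- case analysis on vanishing of the conditioning factors
  rcases eq_or_lt_of_le (ENNReal.toReal_nonneg : (0:ℝ) ≤ R1') with h1 | h1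
  · have hJ11z : J11 = 0 :=
      le_antisymm (le_trans (Jle μ A B C a₁ b₁ c₁ t) h1.symm.le) (RnP_nonneg μ A B C a₁ b₁ c₁)
    have hJ12z : J12 = 0 :=
      le_antisymm (le_trans (le_trans (Jle μ A B C _ _ c₂ t) hR12'.le) h1.symm.le)
        (RnP_nonneg μ A B C _ _ c₂)
    rw [hJ11z, hJ12z, zero_mul, zero_mul]
  rcases eq_or_lt_of_le (ENNReal.toReal_nonneg : (0:ℝ) ≤ R2') with h2 | h2
  · have hJ22z : J22 = 0 :=
      le_antisymm (le_trans (Jle μ A B C a₂ b₂ c₂ t) h2.symm.le) (RnP_nonneg μ A B C a₂ b₂ c₂)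
    have hJ21z : J21 = 0 :=
      le_antisymm (le_trans (le_trans (Jle μ A B C _ _ c₁ t) hR21'.le) h2.symm.le)
        (RnP_nonneg μ A B C _ _ c₁)
    rw [hJ22z, hJ21z, mul_zero, mul_zero]
  by_cases hq1 : Q1' = 0
  · obtain ⟨s, hs, hs0⟩ := Finset.prod_eq_zero_iff.mp hq1
    have hst : s ≠ t := Finset.ne_of_mem_erase hs
    have hJ11z : J11 = 0 :=
      le_antisymm (le_trans (Jle μ A B C a₁ b₁ c₁ s) hs0.le) (RnP_nonneg μ A B C a₁ b₁ c₁)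
    have h21eq : rP' μ A B C (Function.update a₁ t (a₂ t)) (Function.update b₁ t (b₂ t)) c₁ s
        = rP' μ A B C a₁ b₁ c₁ s :=
      rP'_congr μ A B C (Function.update_of_ne hst _ _) (Function.update_of_ne hst _ _)
        (fun j _ => rfl)
    have hJ21z : J21 = 0 :=
      le_antisymm (le_trans (le_trans (Jle μ A B C _ _ c₁ s) h21eq.le) hs0.le)
        (RnP_nonneg μ A B C _ _ c₁)
    rw [hJ11z, hJ21z, zero_mul, mul_zero]
  by_cases hq2 : Q2' = 0
  · obtain ⟨s, hs, hs0⟩ := Finset.prod_eq_zero_iff.mp hq2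
    have hst : s ≠ t := Finset.ne_of_mem_erase hs
    have hJ22z : J22 = 0 :=
      le_antisymm (le_trans (Jle μ A B C a₂ b₂ c₂ s) hs0.le) (RnP_nonneg μ A B C a₂ b₂ c₂)
    have h12eq : rP' μ A B C (Function.update a₂ t (a₁ t)) (Function.update b₂ t (b₁ t)) c₂ s
        = rP' μ A B C a₂ b₂ c₂ s :=
      rP'_congr μ A B C (Function.update_of_ne hst _ _) (Function.update_of_ne hst _ _)
        (fun j _ => rfl)
    have hJ12z : J12 = 0 :=
      le_antisymm (le_trans (le_trans (Jle μ A B C _ _ c₂ s) h12eq.le) hs0.le)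
        (RnP_nonneg μ A B C _ _ c₂)
    rw [hJ22z, hJ12z, mul_zero, zero_mul]
  -- all factors positive
  have hK : 0 < R1' * Q1' * (R2' * Q2') := by
    have hq1' : 0 < Q1' := lt_of_le_of_ne (Finset.prod_nonneg fun s _ => ENNReal.toReal_nonneg)
      (Ne.symm hq1)
    have hq2' : 0 < Q2' := lt_of_le_of_ne (Finset.prod_nonneg fun s _ => ENNReal.toReal_nonneg)
      (Ne.symm hq2)
    positivity
  have hL : J11 * J22 * (R1' * Q1' * (R2' * Q2')) = (P1 * R1 * Q1) * (P2 * R2 * Q2) := by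
    linear_combination (J22 * (R2' * Q2')) * E11 + (P1 * R1 * Q1) * E22
  have hR : J12 * J21 * (R1' * Q1' * (R2' * Q2')) = (P1 * R1 * Q2) * (P2 * R2 * Q1) := by
    linear_combination (J21 * (R2' * Q1')) * E12 + (P1 * R1 * Q2) * E21
  have : J11 * J22 * (R1' * Q1' * (R2' * Q2')) = J12 * J21 * (R1' * Q1' * (R2' * Q2')) := by
    rw [hL, hR]; ring
  exact mul_right_cancel₀ (ne_of_gt hK) this

end Cross

section Config

set_option linter.unusedSectionVars false

variable (t : Fin n)

/-- The `A`-configuration determined by `u` (at `t`) and `v` (elsewhere). -/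
def cfgA (u : 𝔄 t × 𝔅 t)
    (v : (∀ s : {s : Fin n // s ≠ t}, 𝔄 s.1 × 𝔅 s.1) × ∀ s : {s : Fin n // t < s.1}, ℭ s.1) :
    ∀ s, 𝔄 s := fun s =>
  if h : s = t then cast (congrArg 𝔄 h.symm) u.1 else (v.1 ⟨s, h⟩).1

/-- The `B`-configuration determined by `u` (at `t`) and `v` (elsewhere). -/
def cfgB (u : 𝔄 t × 𝔅 t)
    (v : (∀ s : {s : Fin n // s ≠ t}, 𝔄 s.1 × 𝔅 s.1) × ∀ s : {s : Fin n // t < s.1}, ℭ s.1) :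
    ∀ s, 𝔅 s := fun s =>
  if h : s = t then cast (congrArg 𝔅 h.symm) u.2 else (v.1 ⟨s, h⟩).2

/-- The `C`-configuration determined by `w` (up to `t`) and `v` (after `t`). -/
def cfgC (v : (∀ s : {s : Fin n // s ≠ t}, 𝔄 s.1 × 𝔅 s.1) × ∀ s : {s : Fin n // t < s.1}, ℭ s.1)
    (w : ∀ s : {s : Fin n // s ≤ t}, ℭ s.1) : ∀ s, ℭ s := fun s =>
  if h : s ≤ t then w ⟨s, h⟩ else v.2 ⟨s, lt_of_not_ge h⟩

variable {u : 𝔄 t × 𝔅 t}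
  {v : (∀ s : {s : Fin n // s ≠ t}, 𝔄 s.1 × 𝔅 s.1) × ∀ s : {s : Fin n // t < s.1}, ℭ s.1}
  {w : ∀ s : {s : Fin n // s ≤ t}, ℭ s.1}

lemma cfgA_t : cfgA t u v t = u.1 := by simp [cfgA]

lemma cfgB_t : cfgB t u v t = u.2 := by simp [cfgB]

lemma cfgA_ne {s : Fin n} (h : s ≠ t) : cfgA t u v s = (v.1 ⟨s, h⟩).1 := by simp [cfgA, h]

lemma cfgB_ne {s : Fin n} (h : s ≠ t) : cfgB t u v s = (v.1 ⟨s, h⟩).2 := by simp [cfgB, h]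

lemma cfgC_le {s : Fin n} (h : s ≤ t) : cfgC t v w s = w ⟨s, h⟩ := by simp [cfgC, h]

lemma cfgC_gt {s : Fin n} (h : t < s) : cfgC t v w s = v.2 ⟨s, h⟩ := by
  have h' : ¬ s ≤ t := not_le.mpr h
  simp [cfgC, h']

lemma Jset (μ : Measure Ω) (A : ∀ t, Ω → 𝔄 t) (B : ∀ t, Ω → 𝔅 t) (C : ∀ t, Ω → ℭ t)
    (u' : 𝔄 t × 𝔅 t)
    (v' : (∀ s : {s : Fin n // s ≠ t}, 𝔄 s.1 × 𝔅 s.1) × ∀ s : {s : Fin n // t < s.1}, ℭ s.1)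
    (w' : ∀ s : {s : Fin n // s ≤ t}, ℭ s.1) :
    {ω | (A t ω, B t ω) = u'
        ∧ ((fun s : {s : Fin n // s ≠ t} => (A s.1 ω, B s.1 ω)),
           (fun s : {s : Fin n // t < s.1} => C s.1 ω)) = v'
        ∧ (fun s : {s : Fin n // s ≤ t} => C s.1 ω) = w'}
      = {ω | (∀ s, A s ω = cfgA t u' v' s ∧ B s ω = cfgB t u' v' s)
          ∧ ∀ s : Fin n, (s : ℕ) < n → C s ω = cfgC t v' w' s} := by
  ext ω
  simp only [Set.mem_setOf_eq]
  constructor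
  · rintro ⟨hU, hV, hW⟩
    have hV1 : (fun s : {s : Fin n // s ≠ t} => (A s.1 ω, B s.1 ω)) = v'.1 :=
      congrArg Prod.fst hV
    have hV2 : (fun s : {s : Fin n // t < s.1} => C s.1 ω) = v'.2 :=
      congrArg Prod.snd hV
    refine ⟨fun s => ?_, fun s _ => ?_⟩
    · by_cases hs : s = t
      · subst hs
        rw [cfgA_t, cfgB_t]
        exact ⟨congrArg Prod.fst hU, congrArg Prod.snd hU⟩
      · rw [cfgA_ne t hs, cfgB_ne t hs]
        exact ⟨congrArg Prod.fst (congrFun hV1 ⟨s, hs⟩),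
          congrArg Prod.snd (congrFun hV1 ⟨s, hs⟩)⟩
    · by_cases hs : s ≤ t
      · rw [cfgC_le t hs]
        exact congrFun hW ⟨s, hs⟩
      · have hts : t < s := lt_of_not_ge hs
        rw [cfgC_gt t hts]
        exact congrFun hV2 ⟨s, hts⟩
  · rintro ⟨hAB, hC⟩
    refine ⟨?_, ?_, ?_⟩
    · have h1 := (hAB t).1
      have h2 := (hAB t).2
      rw [cfgA_t] at h1
      rw [cfgB_t] at h2
      exact Prod.ext_iff.mpr ⟨h1, h2⟩
    · apply Prod.ext_iff.mpr
      constructor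
      · funext s
        obtain ⟨s, hs⟩ := s
        have h1 := (hAB s).1
        have h2 := (hAB s).2
        rw [cfgA_ne t hs] at h1
        rw [cfgB_ne t hs] at h2
        exact Prod.ext_iff.mpr ⟨h1, h2⟩
      · funext s
        obtain ⟨s, hs⟩ := s
        have := hC s s.isLt
        rw [cfgC_gt t hs] at this
        exact this
    · funext s
      obtain ⟨s, hs⟩ := s
      have := hC s s.isLt
      rw [cfgC_le t hs] at this
      exact this

lemma configMeas (μ : Measure Ω) (A : ∀ t, Ω → 𝔄 t) (B : ∀ t, Ω → 𝔅 t) (C : ∀ t, Ω → ℭ t)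
    (hAm : ∀ t a, MeasurableSet {ω | A t ω = a})
    (hBm : ∀ t b, MeasurableSet {ω | B t ω = b})
    (hCm : ∀ t c, MeasurableSet {ω | C t ω = c})
    (a : ∀ s, 𝔄 s) (b : ∀ s, 𝔅 s) (c : ∀ s, ℭ s) :
    MeasurableSet {ω | (∀ s, A s ω = a s ∧ B s ω = b s)
      ∧ ∀ s : Fin n, (s : ℕ) < n → C s ω = c s} := by
  have hset : {ω | (∀ s, A s ω = a s ∧ B s ω = b s) ∧ ∀ s : Fin n, (s : ℕ) < n → C s ω = c s}
      = (⋂ s, ({ω | A s ω = a s} ∩ {ω | B s ω = b s})) ∩ ⋂ s : Fin n, {ω | C s ω = c s} := by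
    ext ω
    simp only [Set.mem_inter_iff, Set.mem_iInter, Set.mem_setOf_eq]
    constructor
    · rintro ⟨hAB, hC⟩
      exact ⟨fun s => hAB s, fun s => hC s s.isLt⟩
    · rintro ⟨hAB, hC⟩
      exact ⟨fun s => hAB s, fun s _ => hC s⟩
  rw [hset]
  exact (MeasurableSet.iInter fun s => (hAm s (a s)).inter (hBm s (b s))).inter
    (MeasurableSet.iInter fun s => hCm s (c s))

end Config

/-- under (i) mutual independence of the pairs `(A_t, B_t)`,
(ii) `B^n — (A^n, C^n) — D^n`, and (iii) `C_t — (A_t, B_t, C^{t-1}) — (A^{n∖t}, B^{n∖t})`,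
the pair `(A_t, B_t)` is conditionally independent of `(A^{n∖t}, B^{n∖t}, C_{t+1}^n)`
given `C^t`, for each `t`. -/
theorem stmt11 (μ : Measure Ω) [IsProbabilityMeasure μ]
    (A : ∀ t, Ω → 𝔄 t) (B : ∀ t, Ω → 𝔅 t) (C : ∀ t, Ω → ℭ t) (D : ∀ t, Ω → 𝔇 t)
    (hAm : ∀ t a, MeasurableSet {ω | A t ω = a})
    (hBm : ∀ t b, MeasurableSet {ω | B t ω = b})
    (hCm : ∀ t c, MeasurableSet {ω | C t ω = c})
    (hDm : ∀ t d, MeasurableSet {ω | D t ω = d})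
    (hi : ∀ (T : Finset (Fin n)) (ab : ∀ t, 𝔄 t × 𝔅 t),
      (μ {ω | ∀ t ∈ T, (A t ω, B t ω) = ab t}).toReal =
        ∏ t ∈ T, (μ {ω | (A t ω, B t ω) = ab t}).toReal)
    (hii : CondIndepRV μ (fun ω (t : Fin n) => B t ω) (fun ω (t : Fin n) => D t ω)
      (fun ω => ((fun t => A t ω), (fun t => C t ω))))
    (hiii : ∀ t : Fin n, CondIndepRV μ (C t)
      (fun ω => fun s : {s : Fin n // s ≠ t} => (A s.1 ω, B s.1 ω))
      (fun ω => (A t ω, B t ω, fun s : {s : Fin n // s < t} => C s.1 ω))) :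
    ∀ t : Fin n, CondIndepRV μ
      (fun ω => (A t ω, B t ω))
      (fun ω => ((fun s : {s : Fin n // s ≠ t} => (A s.1 ω, B s.1 ω)),
        (fun s : {s : Fin n // t < s.1} => C s.1 ω)))
      (fun ω => fun s : {s : Fin n // s ≤ t} => C s.1 ω) := by
  classical
  intro t u v w hw
  beta_reduce
  beta_reduce at hw
  set J : (𝔄 t × 𝔅 t) →
      ((∀ s : {s : Fin n // s ≠ t}, 𝔄 s.1 × 𝔅 s.1) × ∀ s : {s : Fin n // t < s.1}, ℭ s.1) → ℝ :=
    fun u' v' => (μ {ω | (A t ω, B t ω) = u'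
        ∧ ((fun s : {s : Fin n // s ≠ t} => (A s.1 ω, B s.1 ω)),
           (fun s : {s : Fin n // t < s.1} => C s.1 ω)) = v'
        ∧ (fun s : {s : Fin n // s ≤ t} => C s.1 ω) = w}).toReal with hJdef
  have hJconf : ∀ u' v',
      J u' v' = RnP μ A B C (cfgA t u' v') (cfgB t u' v') (cfgC t v' w) := by
    intro u' v'
    rw [hJdef]
    show (μ _).toReal = _
    rw [Jset t μ A B C u' v' w]
    rfl
  have hcross : ∀ u1 v1 u2 v2, J u1 v1 * J u2 v2 = J u1 v2 * J u2 v1 := by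
    intro u1 v1 u2 v2
    rw [hJconf u1 v1, hJconf u2 v2, hJconf u1 v2, hJconf u2 v1]
    have hcc : ∀ j : Fin n, (j : ℕ) ≤ (t : ℕ) → cfgC t v1 w j = cfgC t v2 w j := by
      intro j hj
      have hj' : j ≤ t := hj
      rw [cfgC_le t hj', cfgC_le t hj']
    have h12a : cfgA t u1 v2 = Function.update (cfgA t u2 v2) t (cfgA t u1 v1 t) := by
      funext s
      by_cases hs : s = t
      · subst hs; rw [Function.update_self, cfgA_t, cfgA_t]
      · rw [Function.update_of_ne hs, cfgA_ne t hs, cfgA_ne t hs]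
    have h12b : cfgB t u1 v2 = Function.update (cfgB t u2 v2) t (cfgB t u1 v1 t) := by
      funext s
      by_cases hs : s = t
      · subst hs; rw [Function.update_self, cfgB_t, cfgB_t]
      · rw [Function.update_of_ne hs, cfgB_ne t hs, cfgB_ne t hs]
    have h21a : cfgA t u2 v1 = Function.update (cfgA t u1 v1) t (cfgA t u2 v2 t) := by
      funext s
      by_cases hs : s = t
      · subst hs; rw [Function.update_self, cfgA_t, cfgA_t]
      · rw [Function.update_of_ne hs, cfgA_ne t hs, cfgA_ne t hs]
    have h21b : cfgB t u2 v1 = Function.update (cfgB t u1 v1) t (cfgB t u2 v2 t) := by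
      funext s
      by_cases hs : s = t
      · subst hs; rw [Function.update_self, cfgB_t, cfgB_t]
      · rw [Function.update_of_ne hs, cfgB_ne t hs, cfgB_ne t hs]
    rw [h12a, h12b, h21a, h21b]
    exact cross μ A B C hi hiii t (cfgA t u1 v1) (cfgA t u2 v2) (cfgB t u1 v1) (cfgB t u2 v2)
      (cfgC t v1 w) (cfgC t v2 w) hcc
  have hJm : ∀ u' v', MeasurableSet {ω | (A t ω, B t ω) = u'
      ∧ ((fun s : {s : Fin n // s ≠ t} => (A s.1 ω, B s.1 ω)),
         (fun s : {s : Fin n // t < s.1} => C s.1 ω)) = v'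
      ∧ (fun s : {s : Fin n // s ≤ t} => C s.1 ω) = w} := by
    intro u' v'
    rw [Jset t μ A B C u' v' w]
    exact configMeas μ A B C hAm hBm hCm _ _ _
  -- partition of the conditioning event
  have hZ : (μ {ω | (fun s : {s : Fin n // s ≤ t} => C s.1 ω) = w}).toReal
      = ∑ u', ∑ v', J u' v' := by
    have hpiece : ∀ x : (𝔄 t × 𝔅 t) ×
        ((∀ s : {s : Fin n // s ≠ t}, 𝔄 s.1 × 𝔅 s.1) × ∀ s : {s : Fin n // t < s.1}, ℭ s.1),
        {ω | (fun s : {s : Fin n // s ≤ t} => C s.1 ω) = w}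
          ∩ (fun ω => ((A t ω, B t ω),
              ((fun s : {s : Fin n // s ≠ t} => (A s.1 ω, B s.1 ω)),
               (fun s : {s : Fin n // t < s.1} => C s.1 ω)))) ⁻¹' {x}
        = {ω | (A t ω, B t ω) = x.1
            ∧ ((fun s : {s : Fin n // s ≠ t} => (A s.1 ω, B s.1 ω)),
               (fun s : {s : Fin n // t < s.1} => C s.1 ω)) = x.2
            ∧ (fun s : {s : Fin n // s ≤ t} => C s.1 ω) = w} := by
      intro x
      ext ω
      simp only [Set.mem_inter_iff, Set.mem_preimage, Set.mem_singleton_iff, Set.mem_setOf_eq,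
        Prod.ext_iff]
      tauto
    rw [meas_partition' μ _ _ (fun x => by rw [hpiece x]; exact hJm x.1 x.2),
      Fintype.sum_prod_type]
    exact Finset.sum_congr rfl fun u' _ => Finset.sum_congr rfl fun v' _ => by
      rw [hpiece (u', v')]
  have hY1 : (μ {ω | (A t ω, B t ω) = u
      ∧ (fun s : {s : Fin n // s ≤ t} => C s.1 ω) = w}).toReal = ∑ v', J u v' := by
    have hpiece : ∀ x,
        {ω | (A t ω, B t ω) = u ∧ (fun s : {s : Fin n // s ≤ t} => C s.1 ω) = w}
          ∩ (fun ω => ((fun s : {s : Fin n // s ≠ t} => (A s.1 ω, B s.1 ω)),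
               (fun s : {s : Fin n // t < s.1} => C s.1 ω))) ⁻¹' {x}
        = {ω | (A t ω, B t ω) = u
            ∧ ((fun s : {s : Fin n // s ≠ t} => (A s.1 ω, B s.1 ω)),
               (fun s : {s : Fin n // t < s.1} => C s.1 ω)) = x
            ∧ (fun s : {s : Fin n // s ≤ t} => C s.1 ω) = w} := by
      intro x
      ext ω
      simp only [Set.mem_inter_iff, Set.mem_preimage, Set.mem_singleton_iff, Set.mem_setOf_eq]
      tauto
    rw [meas_partition' μ _ _ (fun x => by rw [hpiece x]; exact hJm u x)]
    exact Finset.sum_congr rfl fun v' _ => by rw [hpiece v']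
  have hY2 : (μ {ω | ((fun s : {s : Fin n // s ≠ t} => (A s.1 ω, B s.1 ω)),
        (fun s : {s : Fin n // t < s.1} => C s.1 ω)) = v
      ∧ (fun s : {s : Fin n // s ≤ t} => C s.1 ω) = w}).toReal = ∑ u', J u' v := by
    have hpiece : ∀ x,
        {ω | ((fun s : {s : Fin n // s ≠ t} => (A s.1 ω, B s.1 ω)),
             (fun s : {s : Fin n // t < s.1} => C s.1 ω)) = v
            ∧ (fun s : {s : Fin n // s ≤ t} => C s.1 ω) = w}
          ∩ (fun ω => (A t ω, B t ω)) ⁻¹' {x}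
        = {ω | (A t ω, B t ω) = x
            ∧ ((fun s : {s : Fin n // s ≠ t} => (A s.1 ω, B s.1 ω)),
               (fun s : {s : Fin n // t < s.1} => C s.1 ω)) = v
            ∧ (fun s : {s : Fin n // s ≤ t} => C s.1 ω) = w} := by
      intro x
      ext ω
      simp only [Set.mem_inter_iff, Set.mem_preimage, Set.mem_singleton_iff, Set.mem_setOf_eq]
      tauto
    rw [meas_partition' μ _ _ (fun x => by rw [hpiece x]; exact hJm x v)]
    exact Finset.sum_congr rfl fun u' _ => by rw [hpiece u']
  exact condindep_of_cross' J _ _ _ _ u v hcross rfl hY1 hY2 hZ hw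
end
end

section
/- Under hypotheses (i)–(iii), for every t = 1, …, n the random variable B_t is conditionally independent of D_t given (A_t, C^t). -/
open MeasureTheory Finset

noncomputable section AuxStmt12

open Classical in
/-- Sum of `p` over atoms satisfying `Q`. -/
noncomputable def PW {V : Type*} [Fintype V] (p : V → ℝ) (Q : V → Prop) : ℝ :=
  ∑ v, if Q v then p v else 0

namespace PW

variable {V : Type*} [Fintype V] {p : V → ℝ}

theorem congr' {Q Q' : V → Prop} (h : ∀ v, Q v ↔ Q' v) : PW p Q = PW p Q' := by
  classical
  unfold PW
  refine Finset.sum_congr rfl fun v _ => ?_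
  simp [h v]

theorem nonneg (hp : ∀ v, 0 ≤ p v) (Q : V → Prop) : 0 ≤ PW p Q := by
  classical
  refine Finset.sum_nonneg fun v _ => ?_
  split <;> simp [hp v]

theorem mono (hp : ∀ v, 0 ≤ p v) {Q Q' : V → Prop} (h : ∀ v, Q v → Q' v) :
    PW p Q ≤ PW p Q' := by
  classical
  refine Finset.sum_le_sum fun v _ => ?_
  by_cases hv : Q v
  · simp [hv, h v hv]
  · simp only [hv, if_false]
    split <;> simp [hp v]

theorem split {γ : Type*} (g : V → γ) (s : Finset γ) (Q : V → Prop) :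
    ∑ y ∈ s, PW p (fun v => g v = y ∧ Q v) = PW p (fun v => g v ∈ s ∧ Q v) := by
  classical
  unfold PW
  rw [Finset.sum_comm]
  refine Finset.sum_congr rfl fun v _ => ?_
  beta_reduce
  by_cases hQ : Q v
  · simp only [hQ, and_true]
    by_cases hm : g v ∈ s
    · rw [if_pos hm, Finset.sum_eq_single (g v)]
      · simp
      · intro y _ hy; exact if_neg (fun h => hy h.symm)
      · intro h; exact absurd hm h
    · rw [if_neg hm]
      refine Finset.sum_eq_zero fun y hy => if_neg (fun h : g v = y => hm ?_)
      rw [h]; exact hy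
  · simp [hQ]

theorem split_univ {γ : Type*} [Fintype γ] (g : V → γ) (Q : V → Prop) :
    ∑ y : γ, PW p (fun v => g v = y ∧ Q v) = PW p Q := by
  classical
  rw [split g Finset.univ Q]
  exact congr' fun v => by simp

end PW

/-- Pinned-coordinate sum of products. -/
theorem sum_pinned {ι : Type*} [Fintype ι] [DecidableEq ι] {X : ι → Type*}
    [∀ i, Fintype (X i)] (f : ∀ i, X i → ℝ) (t : ι) (xt : X t)
    (s : Finset (∀ i, X i)) (hs : ∀ g, g ∈ s ↔ g t = xt) :
    ∑ g ∈ s, ∏ i, f i (g i)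
      = f t xt * ∏ i ∈ Finset.univ.erase t, ∑ x, f i x := by
  classical
  have hss : s = Finset.univ.filter (fun g => g t = xt) := by
    ext g; simp [hs g]
  subst hss
  set f' : ∀ i, X i → ℝ := Function.update f t (fun x => if x = xt then f t x else 0) with hf'
  have h1 : ∀ g : ∀ i, X i, ∏ i, f' i (g i) = if g t = xt then ∏ i, f i (g i) else 0 := by
    intro g
    by_cases hg : g t = xt
    · rw [if_pos hg]
      refine Finset.prod_congr rfl fun i _ => ?_
      by_cases hi : i = t
      · subst hi; simp [hf', hg]
      · simp [hf', Function.update_of_ne hi]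
    · rw [if_neg hg]
      refine Finset.prod_eq_zero (Finset.mem_univ t) ?_
      simp [hf', hg]
  have h2 : ∏ i, ∑ x, f' i x = ∑ g : ∀ i, X i, ∏ i, f' i (g i) := by
    rw [Finset.prod_univ_sum (fun i => (Finset.univ : Finset (X i))) f']
    rw [Fintype.piFinset_univ]
  calc ∑ g ∈ Finset.univ.filter (fun g : ∀ i, X i => g t = xt), ∏ i, f i (g i)
      = ∑ g : ∀ i, X i, if g t = xt then ∏ i, f i (g i) else 0 := by
        rw [Finset.sum_filter]
    _ = ∑ g : ∀ i, X i, ∏ i, f' i (g i) := by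
        refine Finset.sum_congr rfl fun g _ => (h1 g).symm
    _ = ∏ i, ∑ x, f' i x := h2.symm
    _ = f t xt * ∏ i ∈ Finset.univ.erase t, ∑ x, f i x := by
        rw [← Finset.mul_prod_erase Finset.univ (fun i => ∑ x, f' i x) (Finset.mem_univ t)]
        congr 1
        · simp [hf']
        · refine Finset.prod_congr rfl fun i hi => ?_
          refine Finset.sum_congr rfl fun x _ => ?_
          simp [hf', Function.update_of_ne (Finset.mem_erase.mp hi).1]

end AuxStmt12

section Core

variable {n : ℕ} {𝔄 𝔅 ℭ 𝔇 : Fin n → Type*}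
  [∀ t, Fintype (𝔄 t)] [∀ t, Fintype (𝔅 t)] [∀ t, Fintype (ℭ t)] [∀ t, Fintype (𝔇 t)]

theorem core_stmt12
    (p : ((∀ t, 𝔄 t) × (∀ t, 𝔅 t) × (∀ t, ℭ t) × (∀ t, 𝔇 t)) → ℝ)
    (hp : ∀ v, 0 ≤ p v)
    (h1 : ∀ (T : Finset (Fin n)) (ab : ∀ s, 𝔄 s × 𝔅 s),
      PW p (fun v => ∀ s ∈ T, (v.1 s, v.2.1 s) = ab s)
        = ∏ s ∈ T, PW p (fun v => (v.1 s, v.2.1 s) = ab s))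
    (h2 : ∀ (b : ∀ s, 𝔅 s) (d : ∀ s, 𝔇 s) (a : ∀ s, 𝔄 s) (c : ∀ s, ℭ s),
      PW p (fun v => v.2.1 = b ∧ v.2.2.2 = d ∧ v.1 = a ∧ v.2.2.1 = c)
          * PW p (fun v => v.1 = a ∧ v.2.2.1 = c)
        = PW p (fun v => v.2.1 = b ∧ v.1 = a ∧ v.2.2.1 = c)
          * PW p (fun v => v.2.2.2 = d ∧ v.1 = a ∧ v.2.2.1 = c))
    (h3 : ∀ (s : Fin n) (a : ∀ u, 𝔄 u) (b : ∀ u, 𝔅 u) (c : ∀ u, ℭ u),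
      PW p (fun v => v.1 = a ∧ v.2.1 = b ∧ ∀ u : Fin n, u.1 < s.1 + 1 → v.2.2.1 u = c u)
          * PW p (fun v => v.1 s = a s ∧ v.2.1 s = b s ∧
              ∀ u : Fin n, u.1 < s.1 → v.2.2.1 u = c u)
        = PW p (fun v => v.1 s = a s ∧ v.2.1 s = b s ∧
              ∀ u : Fin n, u.1 < s.1 + 1 → v.2.2.1 u = c u)
          * PW p (fun v => v.1 = a ∧ v.2.1 = b ∧ ∀ u : Fin n, u.1 < s.1 → v.2.2.1 u = c u)) :
    ∀ (t : Fin n) (bt : 𝔅 t) (dt : 𝔇 t) (at_ : 𝔄 t) (cle : ∀ s : {s : Fin n // s ≤ t}, ℭ s.1),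
      PW p (fun v => v.2.1 t = bt ∧ v.2.2.2 t = dt ∧ v.1 t = at_ ∧
            ∀ (s : Fin n) (h : s ≤ t), v.2.2.1 s = cle ⟨s, h⟩)
          * PW p (fun v => v.1 t = at_ ∧ ∀ (s : Fin n) (h : s ≤ t), v.2.2.1 s = cle ⟨s, h⟩)
        = PW p (fun v => v.2.1 t = bt ∧ v.1 t = at_ ∧
            ∀ (s : Fin n) (h : s ≤ t), v.2.2.1 s = cle ⟨s, h⟩)
          * PW p (fun v => v.2.2.2 t = dt ∧ v.1 t = at_ ∧
            ∀ (s : Fin n) (h : s ≤ t), v.2.2.1 s = cle ⟨s, h⟩) := by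
  classical
  intro t bt dt at_ cle
  -- basic abbreviations
  set pab : ∀ s : Fin n, 𝔄 s → 𝔅 s → ℝ :=
    fun s x y => PW p (fun v => v.1 s = x ∧ v.2.1 s = y) with hpab
  set num : ∀ s : Fin n, 𝔄 s → 𝔅 s → (∀ u, ℭ u) → ℝ :=
    fun s x y c => PW p (fun v => v.1 s = x ∧ v.2.1 s = y ∧
      ∀ u : Fin n, u.1 < s.1 + 1 → v.2.2.1 u = c u) with hnum
  set den : ∀ s : Fin n, 𝔄 s → 𝔅 s → (∀ u, ℭ u) → ℝ :=
    fun s x y c => PW p (fun v => v.1 s = x ∧ v.2.1 s = y ∧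
      ∀ u : Fin n, u.1 < s.1 → v.2.2.1 u = c u) with hden
  set q : ∀ s : Fin n, 𝔄 s → 𝔅 s → (∀ u, ℭ u) → ℝ :=
    fun s x y c => num s x y c / den s x y c with hq
  -- Fact A
  have factA : ∀ (k : ℕ) (a : ∀ u, 𝔄 u) (b : ∀ u, 𝔅 u) (c : ∀ u, ℭ u),
      PW p (fun v => v.1 = a ∧ v.2.1 = b ∧ ∀ u : Fin n, u.1 < k → v.2.2.1 u = c u)
        = (∏ s, pab s (a s) (b s)) *
            ∏ s ∈ Finset.univ.filter (fun s : Fin n => s.1 < k), q s (a s) (b s) c := by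
    intro k
    induction k with
    | zero =>
      intro a b c
      have e0 : PW p (fun v => v.1 = a ∧ v.2.1 = b ∧ ∀ u : Fin n, u.1 < 0 → v.2.2.1 u = c u)
          = PW p (fun v => ∀ s ∈ Finset.univ, (v.1 s, v.2.1 s) = (a s, b s)) := by
        refine PW.congr' fun v => ?_
        constructor
        · rintro ⟨ha, hb, -⟩ s _; rw [ha, hb]
        · intro h
          have ha : v.1 = a := funext fun s => congrArg Prod.fst (h s (Finset.mem_univ s))
          have hb : v.2.1 = b := funext fun s => congrArg Prod.snd (h s (Finset.mem_univ s))
          exact ⟨ha, hb, fun u hu => absurd hu (Nat.not_lt_zero _)⟩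
      have e1 : Finset.univ.filter (fun s : Fin n => s.1 < 0) = ∅ := by
        ext s; simp
      rw [e0, h1 Finset.univ (fun s => (a s, b s)), e1, Finset.prod_empty, mul_one]
      refine Finset.prod_congr rfl fun s _ => ?_
      refine PW.congr' fun v => ?_
      simp [Prod.ext_iff]
    | succ k ih =>
      intro a b c
      by_cases hk : k < n
      · set s : Fin n := ⟨k, hk⟩ with hs
        have hsv : (s : ℕ) = k := rfl
        have hfilter : Finset.univ.filter (fun u : Fin n => u.1 < k + 1)
            = insert s (Finset.univ.filter (fun u : Fin n => u.1 < k)) := by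
          ext u
          simp only [Finset.mem_filter, Finset.mem_univ, true_and, Finset.mem_insert]
          constructor
          · intro hu
            rcases Nat.lt_or_ge u.1 k with h' | h'
            · exact Or.inr h'
            · exact Or.inl (Fin.ext (by omega))
          · rintro (rfl | hu) <;> omega
        have hnotmem : s ∉ Finset.univ.filter (fun u : Fin n => u.1 < k) := by
          simp [hs]
        have hL : PW p (fun v => v.1 = a ∧ v.2.1 = b ∧ ∀ u : Fin n, u.1 < k + 1 → v.2.2.1 u = c u)
            = PW p (fun v => v.1 = a ∧ v.2.1 = b ∧
                ∀ u : Fin n, u.1 < s.1 + 1 → v.2.2.1 u = c u) := PW.congr' fun v => Iff.rfl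
        have hLk : PW p (fun v => v.1 = a ∧ v.2.1 = b ∧ ∀ u : Fin n, u.1 < k → v.2.2.1 u = c u)
            = PW p (fun v => v.1 = a ∧ v.2.1 = b ∧
                ∀ u : Fin n, u.1 < s.1 → v.2.2.1 u = c u) := PW.congr' fun v => Iff.rfl
        by_cases hd : den s (a s) (b s) c = 0
        · have hq0 : q s (a s) (b s) c = 0 := by simp [hq, hd]
          have hmono : PW p (fun v => v.1 = a ∧ v.2.1 = b ∧
              ∀ u : Fin n, u.1 < k + 1 → v.2.2.1 u = c u) ≤ den s (a s) (b s) c := by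
            rw [hden]
            refine PW.mono hp fun v hv => ?_
            obtain ⟨ha, hb, hc⟩ := hv
            exact ⟨by rw [ha], by rw [hb], fun u hu => hc u (by omega)⟩
          have hnn : 0 ≤ PW p (fun v => v.1 = a ∧ v.2.1 = b ∧
              ∀ u : Fin n, u.1 < k + 1 → v.2.2.1 u = c u) := PW.nonneg hp _
          have hz : PW p (fun v => v.1 = a ∧ v.2.1 = b ∧
              ∀ u : Fin n, u.1 < k + 1 → v.2.2.1 u = c u) = 0 := le_antisymm (hd ▸ hmono) hnn
          rw [hz, hfilter, Finset.prod_insert hnotmem, hq0]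
          ring
        · have key : PW p (fun v => v.1 = a ∧ v.2.1 = b ∧
              ∀ u : Fin n, u.1 < s.1 + 1 → v.2.2.1 u = c u) * den s (a s) (b s) c
              = num s (a s) (b s) c * PW p (fun v => v.1 = a ∧ v.2.1 = b ∧
                  ∀ u : Fin n, u.1 < s.1 → v.2.2.1 u = c u) := h3 s a b c
          have : PW p (fun v => v.1 = a ∧ v.2.1 = b ∧
              ∀ u : Fin n, u.1 < k + 1 → v.2.2.1 u = c u)
              = PW p (fun v => v.1 = a ∧ v.2.1 = b ∧
                  ∀ u : Fin n, u.1 < k → v.2.2.1 u = c u) * q s (a s) (b s) c := by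
            rw [hL, hLk]
            simp only [hq]
            rw [← mul_div_assoc, eq_div_iff hd]
            linarith [key]
          rw [this, ih a b c, hfilter, Finset.prod_insert hnotmem]
          ring
      · have hfilter : Finset.univ.filter (fun u : Fin n => u.1 < k + 1)
            = Finset.univ.filter (fun u : Fin n => u.1 < k) := by
          ext u
          simp only [Finset.mem_filter, Finset.mem_univ, true_and]
          have := u.isLt; omega
        have hcond : ∀ cv : ∀ u, ℭ u,
            (∀ u : Fin n, u.1 < k + 1 → cv u = c u) ↔ (∀ u : Fin n, u.1 < k → cv u = c u) := by
          intro cv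
          constructor
          · intro h u hu; exact h u (by omega)
          · intro h u _; exact h u (by have := u.isLt; omega)
        rw [PW.congr' fun v => by
          exact and_congr_right fun _ => and_congr_right fun _ => hcond v.2.2.1, ih a b c,
          hfilter]
  -- Step B : product formulas
  set FB : Finset (∀ u, 𝔅 u) := Finset.univ.filter (fun b => b t = bt) with hFB
  set FD : Finset (∀ u, 𝔇 u) := Finset.univ.filter (fun d => d t = dt) with hFD
  set G : Fin n → (∀ u, 𝔄 u) → (∀ u, ℭ u) → ℝ :=
    fun s a c => ∑ y, pab s (a s) y * q s (a s) y c with hG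
  have hfull : ∀ (a : ∀ u, 𝔄 u) (b : ∀ u, 𝔅 u) (c : ∀ u, ℭ u),
      PW p (fun v => v.2.1 = b ∧ v.1 = a ∧ v.2.2.1 = c)
        = ∏ s, pab s (a s) (b s) * q s (a s) (b s) c := by
    intro a b c
    have e0 : PW p (fun v => v.2.1 = b ∧ v.1 = a ∧ v.2.2.1 = c)
        = PW p (fun v => v.1 = a ∧ v.2.1 = b ∧ ∀ u : Fin n, u.1 < n → v.2.2.1 u = c u) := by
      refine PW.congr' fun v => ?_
      constructor
      · rintro ⟨hb, ha, hc⟩; exact ⟨ha, hb, fun u _ => by rw [hc]⟩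
      · rintro ⟨ha, hb, hc⟩; exact ⟨hb, ha, funext fun u => hc u u.isLt⟩
    have e1 : Finset.univ.filter (fun s : Fin n => s.1 < n) = Finset.univ := by
      ext u; simp [u.isLt]
    rw [e0, factA n a b c, e1, ← Finset.prod_mul_distrib]
  have hPac : ∀ (a : ∀ u, 𝔄 u) (c : ∀ u, ℭ u),
      PW p (fun v => v.1 = a ∧ v.2.2.1 = c) = ∏ s, G s a c := by
    intro a c
    rw [← PW.split_univ (p := p) (fun v => v.2.1) (fun v => v.1 = a ∧ v.2.2.1 = c)]
    rw [Finset.sum_congr rfl fun (b : ∀ u, 𝔅 u) _ => hfull a b c]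
    rw [hG]
    rw [Finset.prod_univ_sum (fun s : Fin n => (Finset.univ : Finset (𝔅 s)))
      (fun s y => pab s (a s) y * q s (a s) y c), Fintype.piFinset_univ]
  have hPbtac : ∀ (a : ∀ u, 𝔄 u) (c : ∀ u, ℭ u),
      PW p (fun v => v.2.1 t = bt ∧ v.1 = a ∧ v.2.2.1 = c)
        = (pab t (a t) bt * q t (a t) bt c) * ∏ s ∈ Finset.univ.erase t, G s a c := by
    intro a c
    calc PW p (fun v => v.2.1 t = bt ∧ v.1 = a ∧ v.2.2.1 = c)
        = PW p (fun v => v.2.1 ∈ FB ∧ v.1 = a ∧ v.2.2.1 = c) :=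
          PW.congr' fun v => by simp [hFB]
      _ = ∑ b ∈ FB, PW p (fun v => v.2.1 = b ∧ v.1 = a ∧ v.2.2.1 = c) :=
          (PW.split (p := p) (fun v => v.2.1) FB (fun v => v.1 = a ∧ v.2.2.1 = c)).symm
      _ = ∑ b ∈ FB, ∏ s, pab s (a s) (b s) * q s (a s) (b s) c :=
          Finset.sum_congr rfl fun b _ => hfull a b c
      _ = (pab t (a t) bt * q t (a t) bt c) * ∏ s ∈ Finset.univ.erase t, G s a c := by
          rw [sum_pinned (fun s y => pab s (a s) y * q s (a s) y c) t bt FB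
            (fun g => by simp [hFB])]
  -- Step C : constancy on the conditioning event
  set Num : 𝔅 t → ℝ := fun y => PW p (fun v => v.1 t = at_ ∧ v.2.1 t = y ∧
    ∀ (s' : Fin n) (h : s' ≤ t), v.2.2.1 s' = cle ⟨s', h⟩) with hNum
  set Den : 𝔅 t → ℝ := fun y => PW p (fun v => v.1 t = at_ ∧ v.2.1 t = y ∧
    ∀ (s' : Fin n) (h : s' < t), v.2.2.1 s' = cle ⟨s', le_of_lt h⟩) with hDen
  set φ : 𝔅 t → ℝ := fun y => pab t at_ y * (Num y / Den y) with hφ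
  set γ : ℝ := ∑ y, φ y with hγ
  have hconstf : ∀ (a : ∀ u, 𝔄 u) (c : ∀ u, ℭ u), a t = at_ →
      (∀ (s' : Fin n) (h : s' ≤ t), c s' = cle ⟨s', h⟩) →
      ∀ y : 𝔅 t, pab t (a t) y * q t (a t) y c = φ y := by
    intro a c ha hc y
    have e1 : pab t (a t) y = pab t at_ y := by rw [ha]
    have e2 : num t (a t) y c = Num y := by
      refine PW.congr' fun v => ?_
      rw [ha]
      refine and_congr_right fun _ => and_congr_right fun _ => ?_
      constructor
      · intro h s' hs'
        have hlt : (s' : ℕ) < (t : ℕ) + 1 := by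
          have := Fin.le_def.mp hs'; omega
        rw [h s' hlt, hc s' hs']
      · intro h u hu
        have hu' : u ≤ t := Fin.le_def.mpr (by omega)
        rw [h u hu', hc u hu']
    have e3 : den t (a t) y c = Den y := by
      refine PW.congr' fun v => ?_
      rw [ha]
      refine and_congr_right fun _ => and_congr_right fun _ => ?_
      constructor
      · intro h s' hs'
        have hlt : (s' : ℕ) < (t : ℕ) := Fin.lt_def.mp hs'
        rw [h s' hlt, hc s' (le_of_lt hs')]
      · intro h u hu
        have hu' : u < t := Fin.lt_def.mpr hu
        rw [h u hu', hc u (le_of_lt hu')]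
    rw [hφ]
    simp only [hq]
    rw [e1, e2, e3]
  have hgG : ∀ (a : ∀ u, 𝔄 u) (c : ∀ u, ℭ u), a t = at_ →
      (∀ (s' : Fin n) (h : s' ≤ t), c s' = cle ⟨s', h⟩) → G t a c = γ := by
    intro a c ha hc
    rw [hG, hγ]
    exact Finset.sum_congr rfl fun y _ => hconstf a c ha hc y
  -- Step D : assembly
  set g2 : ((∀ u, 𝔄 u) × (∀ u, 𝔅 u) × (∀ u, ℭ u) × (∀ u, 𝔇 u)) →
      ((∀ u, 𝔄 u) × (∀ u, ℭ u)) := fun v => (v.1, v.2.2.1) with hg2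
  set FR : Finset ((∀ u, 𝔄 u) × (∀ u, ℭ u)) := Finset.univ.filter (fun ac =>
    ac.1 t = at_ ∧ ∀ (s' : Fin n) (h : s' ≤ t), ac.2 s' = cle ⟨s', h⟩) with hFR
  set T1 : ((∀ u, 𝔄 u) × (∀ u, ℭ u)) → ℝ := fun ac =>
    PW p (fun v => v.2.1 t = bt ∧ v.2.2.2 t = dt ∧ v.1 = ac.1 ∧ v.2.2.1 = ac.2) with hT1
  set T2 : ((∀ u, 𝔄 u) × (∀ u, ℭ u)) → ℝ := fun ac =>
    PW p (fun v => v.2.1 t = bt ∧ v.1 = ac.1 ∧ v.2.2.1 = ac.2) with hT2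
  set T3 : ((∀ u, 𝔄 u) × (∀ u, ℭ u)) → ℝ := fun ac =>
    PW p (fun v => v.2.2.2 t = dt ∧ v.1 = ac.1 ∧ v.2.2.1 = ac.2) with hT3
  set T0 : ((∀ u, 𝔄 u) × (∀ u, ℭ u)) → ℝ := fun ac =>
    PW p (fun v => v.1 = ac.1 ∧ v.2.2.1 = ac.2) with hT0
  have hmemFR : ∀ ac ∈ FR, ac.1 t = at_ ∧
      ∀ (s' : Fin n) (h : s' ≤ t), ac.2 s' = cle ⟨s', h⟩ := by
    intro ac hac
    rw [hFR] at hac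
    exact (Finset.mem_filter.mp hac).2
  -- generic splitting along (a, c)
  have hsum : ∀ (X : ((∀ u, 𝔄 u) × (∀ u, 𝔅 u) × (∀ u, ℭ u) × (∀ u, 𝔇 u)) → Prop),
      ∑ ac ∈ FR, PW p (fun v => X v ∧ v.1 = ac.1 ∧ v.2.2.1 = ac.2)
      = PW p (fun v => X v ∧ v.1 t = at_ ∧
          ∀ (s' : Fin n) (h : s' ≤ t), v.2.2.1 s' = cle ⟨s', h⟩) := by
    intro X
    calc ∑ ac ∈ FR, PW p (fun v => X v ∧ v.1 = ac.1 ∧ v.2.2.1 = ac.2)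
        = ∑ ac ∈ FR, PW p (fun v => g2 v = ac ∧ X v) := by
          refine Finset.sum_congr rfl fun ac _ => PW.congr' fun v => ?_
          constructor
          · rintro ⟨hx, h1', h2'⟩
            exact ⟨Prod.ext_iff.mpr ⟨h1', h2'⟩, hx⟩
          · rintro ⟨hg, hx⟩
            exact ⟨hx, congrArg Prod.fst hg, congrArg Prod.snd hg⟩
      _ = PW p (fun v => g2 v ∈ FR ∧ X v) := PW.split (p := p) g2 FR X
      _ = PW p (fun v => X v ∧ v.1 t = at_ ∧
          ∀ (s' : Fin n) (h : s' ≤ t), v.2.2.1 s' = cle ⟨s', h⟩) := by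
          refine PW.congr' fun v => ?_
          rw [hFR, hg2]
          simp only [Finset.mem_filter, Finset.mem_univ, true_and]
          tauto
  -- marginalized version of h2
  have L2m : ∀ ac : ((∀ u, 𝔄 u) × (∀ u, ℭ u)), T1 ac * T0 ac = T2 ac * T3 ac := by
    intro ac
    have claim1 : ∀ b : ∀ u, 𝔅 u,
        PW p (fun v => v.2.1 = b ∧ v.2.2.2 t = dt ∧ v.1 = ac.1 ∧ v.2.2.1 = ac.2) * T0 ac
          = PW p (fun v => v.2.1 = b ∧ v.1 = ac.1 ∧ v.2.2.1 = ac.2) * T3 ac := by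
      intro b
      calc PW p (fun v => v.2.1 = b ∧ v.2.2.2 t = dt ∧ v.1 = ac.1 ∧ v.2.2.1 = ac.2) * T0 ac
          = PW p (fun v => v.2.2.2 ∈ FD ∧ v.2.1 = b ∧ v.1 = ac.1 ∧ v.2.2.1 = ac.2) * T0 ac := by
            congr 1
            exact PW.congr' fun v => by simp [hFD]; tauto
        _ = (∑ d ∈ FD, PW p (fun v => v.2.2.2 = d ∧ v.2.1 = b ∧
              v.1 = ac.1 ∧ v.2.2.1 = ac.2)) * T0 ac := by
            rw [PW.split (p := p) (fun v => v.2.2.2) FD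
              (fun v => v.2.1 = b ∧ v.1 = ac.1 ∧ v.2.2.1 = ac.2)]
        _ = ∑ d ∈ FD, PW p (fun v => v.2.1 = b ∧ v.2.2.2 = d ∧
              v.1 = ac.1 ∧ v.2.2.1 = ac.2) * T0 ac := by
            rw [Finset.sum_mul]
            refine Finset.sum_congr rfl fun d _ => ?_
            congr 1
            exact PW.congr' fun v => by tauto
        _ = ∑ d ∈ FD, PW p (fun v => v.2.1 = b ∧ v.1 = ac.1 ∧ v.2.2.1 = ac.2) *
              PW p (fun v => v.2.2.2 = d ∧ v.1 = ac.1 ∧ v.2.2.1 = ac.2) :=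
            Finset.sum_congr rfl fun d _ => h2 b d ac.1 ac.2
        _ = PW p (fun v => v.2.1 = b ∧ v.1 = ac.1 ∧ v.2.2.1 = ac.2) * T3 ac := by
            rw [← Finset.mul_sum, PW.split (p := p) (fun v => v.2.2.2) FD
              (fun v => v.1 = ac.1 ∧ v.2.2.1 = ac.2)]
            congr 1
            exact PW.congr' fun v => by simp [hFD]
    calc T1 ac * T0 ac
        = PW p (fun v => v.2.1 ∈ FB ∧ v.2.2.2 t = dt ∧
            v.1 = ac.1 ∧ v.2.2.1 = ac.2) * T0 ac := by
          congr 1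
          exact PW.congr' fun v => by simp [hFB]
      _ = (∑ b ∈ FB, PW p (fun v => v.2.1 = b ∧ v.2.2.2 t = dt ∧
            v.1 = ac.1 ∧ v.2.2.1 = ac.2)) * T0 ac := by
          rw [PW.split (p := p) (fun v => v.2.1) FB
            (fun v => v.2.2.2 t = dt ∧ v.1 = ac.1 ∧ v.2.2.1 = ac.2)]
      _ = ∑ b ∈ FB, PW p (fun v => v.2.1 = b ∧ v.2.2.2 t = dt ∧
            v.1 = ac.1 ∧ v.2.2.1 = ac.2) * T0 ac := by
          rw [Finset.sum_mul]
      _ = ∑ b ∈ FB, PW p (fun v => v.2.1 = b ∧ v.1 = ac.1 ∧ v.2.2.1 = ac.2) * T3 ac :=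
          Finset.sum_congr rfl fun b _ => claim1 b
      _ = T2 ac * T3 ac := by
          rw [← Finset.sum_mul, PW.split (p := p) (fun v => v.2.1) FB
            (fun v => v.1 = ac.1 ∧ v.2.2.1 = ac.2)]
          congr 1
          exact PW.congr' fun v => by simp [hFB]
  -- pointwise product formulas on FR
  have hT0f : ∀ ac ∈ FR, T0 ac = γ * ∏ s ∈ Finset.univ.erase t, G s ac.1 ac.2 := by
    intro ac hac
    obtain ⟨ha, hc⟩ := hmemFR ac hac
    calc T0 ac = ∏ s, G s ac.1 ac.2 := hPac ac.1 ac.2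
      _ = G t ac.1 ac.2 * ∏ s ∈ Finset.univ.erase t, G s ac.1 ac.2 :=
          (Finset.mul_prod_erase Finset.univ _ (Finset.mem_univ t)).symm
      _ = γ * ∏ s ∈ Finset.univ.erase t, G s ac.1 ac.2 := by
          rw [hgG ac.1 ac.2 ha hc]
  have hT2f : ∀ ac ∈ FR, T2 ac = φ bt * ∏ s ∈ Finset.univ.erase t, G s ac.1 ac.2 := by
    intro ac hac
    obtain ⟨ha, hc⟩ := hmemFR ac hac
    calc T2 ac = (pab t (ac.1 t) bt * q t (ac.1 t) bt ac.2) *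
          ∏ s ∈ Finset.univ.erase t, G s ac.1 ac.2 := hPbtac ac.1 ac.2
      _ = φ bt * ∏ s ∈ Finset.univ.erase t, G s ac.1 ac.2 := by
          rw [hconstf ac.1 ac.2 ha hc bt]
  set K : ℝ := ∑ ac ∈ FR, ∏ s ∈ Finset.univ.erase t, G s ac.1 ac.2 with hK
  have hPw : PW p (fun v => v.1 t = at_ ∧
      ∀ (s : Fin n) (h : s ≤ t), v.2.2.1 s = cle ⟨s, h⟩) = γ * K := by
    calc PW p (fun v => v.1 t = at_ ∧ ∀ (s : Fin n) (h : s ≤ t), v.2.2.1 s = cle ⟨s, h⟩)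
        = PW p (fun v => True ∧ v.1 t = at_ ∧
            ∀ (s' : Fin n) (h : s' ≤ t), v.2.2.1 s' = cle ⟨s', h⟩) :=
          PW.congr' fun v => by tauto
      _ = ∑ ac ∈ FR, PW p (fun v => True ∧ v.1 = ac.1 ∧ v.2.2.1 = ac.2) :=
          (hsum (fun _ => True)).symm
      _ = ∑ ac ∈ FR, T0 ac := Finset.sum_congr rfl fun ac _ => PW.congr' fun v => by tauto
      _ = ∑ ac ∈ FR, γ * ∏ s ∈ Finset.univ.erase t, G s ac.1 ac.2 :=
          Finset.sum_congr rfl hT0f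
      _ = γ * K := by rw [hK, Finset.mul_sum]
  have hN2 : PW p (fun v => v.2.1 t = bt ∧ v.1 t = at_ ∧
      ∀ (s : Fin n) (h : s ≤ t), v.2.2.1 s = cle ⟨s, h⟩) = φ bt * K := by
    calc PW p (fun v => v.2.1 t = bt ∧ v.1 t = at_ ∧
          ∀ (s : Fin n) (h : s ≤ t), v.2.2.1 s = cle ⟨s, h⟩)
        = ∑ ac ∈ FR, PW p (fun v => v.2.1 t = bt ∧ v.1 = ac.1 ∧ v.2.2.1 = ac.2) :=
          (hsum (fun v => v.2.1 t = bt)).symm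
      _ = ∑ ac ∈ FR, T2 ac := rfl
      _ = ∑ ac ∈ FR, φ bt * ∏ s ∈ Finset.univ.erase t, G s ac.1 ac.2 :=
          Finset.sum_congr rfl hT2f
      _ = φ bt * K := by rw [hK, Finset.mul_sum]
  have hN3 : PW p (fun v => v.2.2.2 t = dt ∧ v.1 t = at_ ∧
      ∀ (s : Fin n) (h : s ≤ t), v.2.2.1 s = cle ⟨s, h⟩) = ∑ ac ∈ FR, T3 ac :=
    (hsum (fun v => v.2.2.2 t = dt)).symm
  have hN1 : PW p (fun v => v.2.1 t = bt ∧ v.2.2.2 t = dt ∧ v.1 t = at_ ∧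
      ∀ (s : Fin n) (h : s ≤ t), v.2.2.1 s = cle ⟨s, h⟩) = ∑ ac ∈ FR, T1 ac := by
    calc PW p (fun v => v.2.1 t = bt ∧ v.2.2.2 t = dt ∧ v.1 t = at_ ∧
          ∀ (s : Fin n) (h : s ≤ t), v.2.2.1 s = cle ⟨s, h⟩)
        = PW p (fun v => (v.2.1 t = bt ∧ v.2.2.2 t = dt) ∧ v.1 t = at_ ∧
          ∀ (s' : Fin n) (h : s' ≤ t), v.2.2.1 s' = cle ⟨s', h⟩) :=
          PW.congr' fun v => by tauto
      _ = ∑ ac ∈ FR, PW p (fun v => (v.2.1 t = bt ∧ v.2.2.2 t = dt) ∧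
            v.1 = ac.1 ∧ v.2.2.1 = ac.2) :=
          (hsum (fun v => v.2.1 t = bt ∧ v.2.2.2 t = dt)).symm
      _ = ∑ ac ∈ FR, T1 ac :=
          Finset.sum_congr rfl fun ac _ => PW.congr' fun v => by tauto
  -- the key pointwise identity
  have star : ∀ ac ∈ FR, T1 ac * (γ * K) = (φ bt * K) * T3 ac := by
    intro ac hac
    by_cases h0 : T0 ac = 0
    · have hT1z : T1 ac = 0 := by
        refine le_antisymm (le_of_le_of_eq (PW.mono hp fun v hv => ?_) h0) (PW.nonneg hp _)
        exact ⟨hv.2.2.1, hv.2.2.2⟩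
      have hT3z : T3 ac = 0 := by
        refine le_antisymm (le_of_le_of_eq (PW.mono hp fun v hv => ?_) h0) (PW.nonneg hp _)
        exact hv.2
      rw [hT1z, hT3z]; ring
    · have hL2 := L2m ac
      have h2f := hT2f ac hac
      have h0f := hT0f ac hac
      apply mul_right_cancel₀ h0
      calc T1 ac * (γ * K) * T0 ac = (T1 ac * T0 ac) * (γ * K) := by ring
        _ = (T2 ac * T3 ac) * (γ * K) := by rw [hL2]
        _ = (φ bt * K) * T3 ac * T0 ac := by rw [h2f, h0f]; ring
  rw [hN1, hPw, hN2, hN3]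
  calc (∑ ac ∈ FR, T1 ac) * (γ * K)
      = ∑ ac ∈ FR, T1 ac * (γ * K) := Finset.sum_mul _ _ _
    _ = ∑ ac ∈ FR, (φ bt * K) * T3 ac := Finset.sum_congr rfl star
    _ = (φ bt * K) * ∑ ac ∈ FR, T3 ac := (Finset.mul_sum _ _ _).symm

end Core

open MeasureTheory

noncomputable section

variable {Ω : Type*} [MeasurableSpace Ω] {n : ℕ}
  {𝔄 𝔅 ℭ 𝔇 : Fin n → Type*}
  [∀ t, Fintype (𝔄 t)] [∀ t, Fintype (𝔅 t)] [∀ t, Fintype (ℭ t)] [∀ t, Fintype (𝔇 t)]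

/-- under (i) mutual independence of the pairs `(A_t, B_t)`,
(ii) `B^n — (A^n, C^n) — D^n`, and (iii) `C_t — (A_t, B_t, C^{t-1}) — (A^{n∖t}, B^{n∖t})`,
one has the Markov chain `B_t — (A_t, C^t) — D_t` for each `t`. -/
theorem stmt12 (μ : Measure Ω) [IsProbabilityMeasure μ]
    (A : ∀ t, Ω → 𝔄 t) (B : ∀ t, Ω → 𝔅 t) (C : ∀ t, Ω → ℭ t) (D : ∀ t, Ω → 𝔇 t)
    (hAm : ∀ t a, MeasurableSet {ω | A t ω = a})
    (hBm : ∀ t b, MeasurableSet {ω | B t ω = b})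
    (hCm : ∀ t c, MeasurableSet {ω | C t ω = c})
    (hDm : ∀ t d, MeasurableSet {ω | D t ω = d})
    (hi : ∀ (T : Finset (Fin n)) (ab : ∀ t, 𝔄 t × 𝔅 t),
      (μ {ω | ∀ t ∈ T, (A t ω, B t ω) = ab t}).toReal =
        ∏ t ∈ T, (μ {ω | (A t ω, B t ω) = ab t}).toReal)
    (hii : CondIndepRV μ (fun ω (t : Fin n) => B t ω) (fun ω (t : Fin n) => D t ω)
      (fun ω => ((fun t => A t ω), (fun t => C t ω))))
    (hiii : ∀ t : Fin n, CondIndepRV μ (C t)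
      (fun ω => fun s : {s : Fin n // s ≠ t} => (A s.1 ω, B s.1 ω))
      (fun ω => (A t ω, B t ω, fun s : {s : Fin n // s < t} => C s.1 ω))) :
    ∀ t : Fin n, CondIndepRV μ (B t) (D t)
      (fun ω => (A t ω, fun s : {s : Fin n // s ≤ t} => C s.1 ω)) := by
  classical
  set F : Ω → ((∀ t, 𝔄 t) × (∀ t, 𝔅 t) × (∀ t, ℭ t) × (∀ t, 𝔇 t)) :=
    fun ω => ((fun t => A t ω), (fun t => B t ω), (fun t => C t ω), (fun t => D t ω)) with hF
  set p : ((∀ t, 𝔄 t) × (∀ t, 𝔅 t) × (∀ t, ℭ t) × (∀ t, 𝔇 t)) → ℝ :=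
    fun v => (μ {ω | F ω = v}).toReal with hpdef
  have hp : ∀ v, 0 ≤ p v := fun v => ENNReal.toReal_nonneg
  have hmeas : ∀ v, MeasurableSet {ω | F ω = v} := by
    intro v
    have hset : {ω | F ω = v} = (⋂ t, {ω | A t ω = v.1 t}) ∩ ((⋂ t, {ω | B t ω = v.2.1 t}) ∩
        ((⋂ t, {ω | C t ω = v.2.2.1 t}) ∩ (⋂ t, {ω | D t ω = v.2.2.2 t}))) := by
      ext ω
      simp only [Set.mem_setOf_eq, Set.mem_inter_iff, Set.mem_iInter, hF, Prod.ext_iff,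
        funext_iff]
    rw [hset]
    exact (MeasurableSet.iInter fun t => hAm t _).inter
      ((MeasurableSet.iInter fun t => hBm t _).inter
        ((MeasurableSet.iInter fun t => hCm t _).inter
          (MeasurableSet.iInter fun t => hDm t _)))
  have bridge : ∀ Q : ((∀ t, 𝔄 t) × (∀ t, 𝔅 t) × (∀ t, ℭ t) × (∀ t, 𝔇 t)) → Prop,
      (μ {ω | Q (F ω)}).toReal = PW p Q := by
    intro Q
    have hunion : {ω | Q (F ω)} = ⋃ v ∈ Finset.univ.filter (fun v => Q v), {ω | F ω = v} := by
      ext ω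
      simp only [Set.mem_setOf_eq, Set.mem_iUnion, Finset.mem_filter, Finset.mem_univ, true_and]
      constructor
      · intro h; exact ⟨F ω, h, rfl⟩
      · rintro ⟨v, hv, he⟩; rw [← he] at hv; exact hv
    have hdisj : (↑(Finset.univ.filter (fun v => Q v)) :
        Set ((∀ t, 𝔄 t) × (∀ t, 𝔅 t) × (∀ t, ℭ t) × (∀ t, 𝔇 t))).PairwiseDisjoint
        (fun v => {ω | F ω = v}) := by
      intro v1 _ v2 _ hne
      refine Set.disjoint_left.mpr fun ω h1 h2 => hne ?_
      rw [← h1, ← h2]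
    rw [hunion, measure_biUnion_finset hdisj fun v _ => hmeas v,
      ENNReal.toReal_sum fun v _ => measure_ne_top μ _]
    unfold PW
    rw [Finset.sum_filter]
  -- hypothesis (i) in PW form
  have h1 : ∀ (T : Finset (Fin n)) (ab : ∀ s, 𝔄 s × 𝔅 s),
      PW p (fun v => ∀ s ∈ T, (v.1 s, v.2.1 s) = ab s)
        = ∏ s ∈ T, PW p (fun v => (v.1 s, v.2.1 s) = ab s) := by
    intro T ab
    rw [← bridge (fun v => ∀ s ∈ T, (v.1 s, v.2.1 s) = ab s)]
    have e2 : ∀ s ∈ T, PW p (fun v => (v.1 s, v.2.1 s) = ab s)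
        = (μ {ω | (A s ω, B s ω) = ab s}).toReal := fun s _ =>
      (bridge (fun v => (v.1 s, v.2.1 s) = ab s)).symm
    rw [Finset.prod_congr rfl e2]
    exact hi T ab
  -- hypothesis (ii) in unnormalized PW form
  have h2 : ∀ (b : ∀ s, 𝔅 s) (d : ∀ s, 𝔇 s) (a : ∀ s, 𝔄 s) (c : ∀ s, ℭ s),
      PW p (fun v => v.2.1 = b ∧ v.2.2.2 = d ∧ v.1 = a ∧ v.2.2.1 = c)
          * PW p (fun v => v.1 = a ∧ v.2.2.1 = c)
        = PW p (fun v => v.2.1 = b ∧ v.1 = a ∧ v.2.2.1 = c)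
          * PW p (fun v => v.2.2.2 = d ∧ v.1 = a ∧ v.2.2.1 = c) := by
    intro b d a c
    have eS0 : (μ {ω | ((fun t => A t ω), (fun t => C t ω)) = (a, c)}).toReal
        = PW p (fun v => v.1 = a ∧ v.2.2.1 = c) := by
      have hset : {ω | ((fun t => A t ω), (fun t => C t ω)) = (a, c)}
          = {ω | (fun v => v.1 = a ∧ v.2.2.1 = c) (F ω)} := by
        ext ω; simp only [Set.mem_setOf_eq, hF, Prod.ext_iff]
      rw [hset]; exact bridge (fun v => v.1 = a ∧ v.2.2.1 = c)
    have eS1 : (μ {ω | (fun t => B t ω) = b ∧ (fun t => D t ω) = d ∧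
        ((fun t => A t ω), (fun t => C t ω)) = (a, c)}).toReal
        = PW p (fun v => v.2.1 = b ∧ v.2.2.2 = d ∧ v.1 = a ∧ v.2.2.1 = c) := by
      have hset : {ω | (fun t => B t ω) = b ∧ (fun t => D t ω) = d ∧
          ((fun t => A t ω), (fun t => C t ω)) = (a, c)}
          = {ω | (fun v => v.2.1 = b ∧ v.2.2.2 = d ∧ v.1 = a ∧ v.2.2.1 = c) (F ω)} := by
        ext ω; simp only [Set.mem_setOf_eq, hF, Prod.ext_iff]; try tauto
      rw [hset]
      exact bridge (fun v => v.2.1 = b ∧ v.2.2.2 = d ∧ v.1 = a ∧ v.2.2.1 = c)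
    have eS2 : (μ {ω | (fun t => B t ω) = b ∧
        ((fun t => A t ω), (fun t => C t ω)) = (a, c)}).toReal
        = PW p (fun v => v.2.1 = b ∧ v.1 = a ∧ v.2.2.1 = c) := by
      have hset : {ω | (fun t => B t ω) = b ∧ ((fun t => A t ω), (fun t => C t ω)) = (a, c)}
          = {ω | (fun v => v.2.1 = b ∧ v.1 = a ∧ v.2.2.1 = c) (F ω)} := by
        ext ω; simp only [Set.mem_setOf_eq, hF, Prod.ext_iff]; try tauto
      rw [hset]
      exact bridge (fun v => v.2.1 = b ∧ v.1 = a ∧ v.2.2.1 = c)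
    have eS3 : (μ {ω | (fun t => D t ω) = d ∧
        ((fun t => A t ω), (fun t => C t ω)) = (a, c)}).toReal
        = PW p (fun v => v.2.2.2 = d ∧ v.1 = a ∧ v.2.2.1 = c) := by
      have hset : {ω | (fun t => D t ω) = d ∧ ((fun t => A t ω), (fun t => C t ω)) = (a, c)}
          = {ω | (fun v => v.2.2.2 = d ∧ v.1 = a ∧ v.2.2.1 = c) (F ω)} := by
        ext ω; simp only [Set.mem_setOf_eq, hF, Prod.ext_iff]; try tauto
      rw [hset]
      exact bridge (fun v => v.2.2.2 = d ∧ v.1 = a ∧ v.2.2.1 = c)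
    by_cases hz : PW p (fun v => v.1 = a ∧ v.2.2.1 = c) = 0
    · have hz2 : PW p (fun v => v.2.1 = b ∧ v.1 = a ∧ v.2.2.1 = c) = 0 :=
        le_antisymm (le_of_le_of_eq (PW.mono hp fun v hv => hv.2) hz) (PW.nonneg hp _)
      rw [hz, hz2, mul_zero, zero_mul]
    · have hpos : 0 < (μ {ω | ((fun t => A t ω), (fun t => C t ω)) = (a, c)}).toReal := by
        rw [eS0]
        exact lt_of_le_of_ne (PW.nonneg hp _) (Ne.symm hz)
      have keyr := hii b d (a, c) hpos
      beta_reduce at keyr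
      rw [eS0, eS1, eS2, eS3] at keyr
      have hne : PW p (fun v => v.1 = a ∧ v.2.2.1 = c) ≠ 0 := hz
      field_simp at keyr
      exact mul_right_cancel₀ hne (by linear_combination (PW p (fun v => v.1 = a ∧ v.2.2.1 = c)) * keyr)
  -- hypothesis (iii) in unnormalized PW form
  have h3 : ∀ (s : Fin n) (a : ∀ u, 𝔄 u) (b : ∀ u, 𝔅 u) (c : ∀ u, ℭ u),
      PW p (fun v => v.1 = a ∧ v.2.1 = b ∧ ∀ u : Fin n, u.1 < s.1 + 1 → v.2.2.1 u = c u)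
          * PW p (fun v => v.1 s = a s ∧ v.2.1 s = b s ∧
              ∀ u : Fin n, u.1 < s.1 → v.2.2.1 u = c u)
        = PW p (fun v => v.1 s = a s ∧ v.2.1 s = b s ∧
              ∀ u : Fin n, u.1 < s.1 + 1 → v.2.2.1 u = c u)
          * PW p (fun v => v.1 = a ∧ v.2.1 = b ∧ ∀ u : Fin n, u.1 < s.1 → v.2.2.1 u = c u) := by
    intro s a b c
    have hprefix : ∀ ω : Ω, ((fun s' : {s' : Fin n // s' < s} => C s'.1 ω)
          = fun s' : {s' : Fin n // s' < s} => c s'.1)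
        ↔ ∀ u : Fin n, u.1 < s.1 → C u ω = c u := by
      intro ω
      constructor
      · intro h u hu
        exact congrFun h ⟨u, Fin.lt_def.mpr hu⟩
      · intro h
        funext s'
        exact h s'.1 (Fin.lt_def.mp s'.2)
    have hpairs : ∀ ω : Ω, (((fun s' : {s' : Fin n // s' ≠ s} => (A s'.1 ω, B s'.1 ω))
          = fun s' : {s' : Fin n // s' ≠ s} => (a s'.1, b s'.1)) ∧ A s ω = a s ∧ B s ω = b s)
        ↔ ((fun u => A u ω) = a ∧ (fun u => B u ω) = b) := by
      intro ω
      constructor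
      · rintro ⟨hne, has, hbs⟩
        constructor
        · funext u
          by_cases hu : u = s
          · subst hu; exact has
          · exact congrArg Prod.fst (congrFun hne ⟨u, hu⟩)
        · funext u
          by_cases hu : u = s
          · subst hu; exact hbs
          · exact congrArg Prod.snd (congrFun hne ⟨u, hu⟩)
      · rintro ⟨ha, hb⟩
        exact ⟨funext fun s' => Prod.ext_iff.mpr ⟨congrFun ha s'.1, congrFun hb s'.1⟩,
          congrFun ha s, congrFun hb s⟩
    have hsucc : ∀ ω : Ω, (C s ω = c s ∧ ∀ u : Fin n, u.1 < s.1 → C u ω = c u)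
        ↔ ∀ u : Fin n, u.1 < s.1 + 1 → C u ω = c u := by
      intro ω
      constructor
      · rintro ⟨h0, h⟩ u hu
        rcases Nat.lt_or_ge u.1 s.1 with h' | h'
        · exact h u h'
        · have : u = s := Fin.ext (by omega)
          rw [this]; exact h0
      · intro h
        exact ⟨h s (by omega), fun u hu => h u (by omega)⟩
    -- the four events of hiii s, in PW form
    have eS0 : (μ {ω | (A s ω, B s ω, fun s' : {s' : Fin n // s' < s} => C s'.1 ω)
        = (a s, b s, fun s' : {s' : Fin n // s' < s} => c s'.1)}).toReal
        = PW p (fun v => v.1 s = a s ∧ v.2.1 s = b s ∧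
            ∀ u : Fin n, u.1 < s.1 → v.2.2.1 u = c u) := by
      have hset : {ω | (A s ω, B s ω, fun s' : {s' : Fin n // s' < s} => C s'.1 ω)
          = (a s, b s, fun s' : {s' : Fin n // s' < s} => c s'.1)}
          = {ω | (fun v => v.1 s = a s ∧ v.2.1 s = b s ∧
              ∀ u : Fin n, u.1 < s.1 → v.2.2.1 u = c u) (F ω)} := by
        ext ω
        simp only [Set.mem_setOf_eq, hF, Prod.ext_iff]
        rw [and_congr_right fun _ => and_congr_right fun _ => hprefix ω]
      rw [hset]
      exact bridge (fun v => v.1 s = a s ∧ v.2.1 s = b s ∧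
        ∀ u : Fin n, u.1 < s.1 → v.2.2.1 u = c u)
    have eS1 : (μ {ω | C s ω = c s ∧
        ((fun s' : {s' : Fin n // s' ≠ s} => (A s'.1 ω, B s'.1 ω))
          = fun s' : {s' : Fin n // s' ≠ s} => (a s'.1, b s'.1)) ∧
        (A s ω, B s ω, fun s' : {s' : Fin n // s' < s} => C s'.1 ω)
          = (a s, b s, fun s' : {s' : Fin n // s' < s} => c s'.1)}).toReal
        = PW p (fun v => v.1 = a ∧ v.2.1 = b ∧
            ∀ u : Fin n, u.1 < s.1 + 1 → v.2.2.1 u = c u) := by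
      have hset : {ω | C s ω = c s ∧
          ((fun s' : {s' : Fin n // s' ≠ s} => (A s'.1 ω, B s'.1 ω))
            = fun s' : {s' : Fin n // s' ≠ s} => (a s'.1, b s'.1)) ∧
          (A s ω, B s ω, fun s' : {s' : Fin n // s' < s} => C s'.1 ω)
            = (a s, b s, fun s' : {s' : Fin n // s' < s} => c s'.1)}
          = {ω | (fun v => v.1 = a ∧ v.2.1 = b ∧
              ∀ u : Fin n, u.1 < s.1 + 1 → v.2.2.1 u = c u) (F ω)} := by
        ext ω
        simp only [Set.mem_setOf_eq, hF, Prod.ext_iff]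
        rw [and_congr_right fun _ => and_congr_right fun _ =>
          and_congr_right fun _ => and_congr_right fun _ => hprefix ω]
        constructor
        · rintro ⟨h0, hpr, has, hbs, hpre⟩
          obtain ⟨ha, hb⟩ := (hpairs ω).mp ⟨hpr, has, hbs⟩
          exact ⟨ha, hb, (hsucc ω).mp ⟨h0, hpre⟩⟩
        · rintro ⟨ha, hb, hpre⟩
          obtain ⟨hpr, has, hbs⟩ := (hpairs ω).mpr ⟨ha, hb⟩
          obtain ⟨h0, hpre'⟩ := (hsucc ω).mpr hpre
          exact ⟨h0, hpr, has, hbs, hpre'⟩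
      rw [hset]
      exact bridge (fun v => v.1 = a ∧ v.2.1 = b ∧
        ∀ u : Fin n, u.1 < s.1 + 1 → v.2.2.1 u = c u)
    have eS2 : (μ {ω | C s ω = c s ∧
        (A s ω, B s ω, fun s' : {s' : Fin n // s' < s} => C s'.1 ω)
          = (a s, b s, fun s' : {s' : Fin n // s' < s} => c s'.1)}).toReal
        = PW p (fun v => v.1 s = a s ∧ v.2.1 s = b s ∧
            ∀ u : Fin n, u.1 < s.1 + 1 → v.2.2.1 u = c u) := by
      have hset : {ω | C s ω = c s ∧
          (A s ω, B s ω, fun s' : {s' : Fin n // s' < s} => C s'.1 ω)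
            = (a s, b s, fun s' : {s' : Fin n // s' < s} => c s'.1)}
          = {ω | (fun v => v.1 s = a s ∧ v.2.1 s = b s ∧
              ∀ u : Fin n, u.1 < s.1 + 1 → v.2.2.1 u = c u) (F ω)} := by
        ext ω
        simp only [Set.mem_setOf_eq, hF, Prod.ext_iff]
        rw [and_congr_right fun _ => and_congr_right fun _ =>
          and_congr_right fun _ => hprefix ω]
        constructor
        · rintro ⟨h0, has, hbs, hpre⟩
          exact ⟨has, hbs, (hsucc ω).mp ⟨h0, hpre⟩⟩
        · rintro ⟨has, hbs, hpre⟩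
          obtain ⟨h0, hpre'⟩ := (hsucc ω).mpr hpre
          exact ⟨h0, has, hbs, hpre'⟩
      rw [hset]
      exact bridge (fun v => v.1 s = a s ∧ v.2.1 s = b s ∧
        ∀ u : Fin n, u.1 < s.1 + 1 → v.2.2.1 u = c u)
    have eS3 : (μ {ω | ((fun s' : {s' : Fin n // s' ≠ s} => (A s'.1 ω, B s'.1 ω))
          = fun s' : {s' : Fin n // s' ≠ s} => (a s'.1, b s'.1)) ∧
        (A s ω, B s ω, fun s' : {s' : Fin n // s' < s} => C s'.1 ω)
          = (a s, b s, fun s' : {s' : Fin n // s' < s} => c s'.1)}).toReal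
        = PW p (fun v => v.1 = a ∧ v.2.1 = b ∧
            ∀ u : Fin n, u.1 < s.1 → v.2.2.1 u = c u) := by
      have hset : {ω | ((fun s' : {s' : Fin n // s' ≠ s} => (A s'.1 ω, B s'.1 ω))
            = fun s' : {s' : Fin n // s' ≠ s} => (a s'.1, b s'.1)) ∧
          (A s ω, B s ω, fun s' : {s' : Fin n // s' < s} => C s'.1 ω)
            = (a s, b s, fun s' : {s' : Fin n // s' < s} => c s'.1)}
          = {ω | (fun v => v.1 = a ∧ v.2.1 = b ∧
              ∀ u : Fin n, u.1 < s.1 → v.2.2.1 u = c u) (F ω)} := by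
        ext ω
        simp only [Set.mem_setOf_eq, hF, Prod.ext_iff]
        rw [and_congr_right fun _ => and_congr_right fun _ =>
          and_congr_right fun _ => hprefix ω]
        constructor
        · rintro ⟨hpr, has, hbs, hpre⟩
          obtain ⟨ha, hb⟩ := (hpairs ω).mp ⟨hpr, has, hbs⟩
          exact ⟨ha, hb, hpre⟩
        · rintro ⟨ha, hb, hpre⟩
          obtain ⟨hpr, has, hbs⟩ := (hpairs ω).mpr ⟨ha, hb⟩
          exact ⟨hpr, has, hbs, hpre⟩
      rw [hset]
      exact bridge (fun v => v.1 = a ∧ v.2.1 = b ∧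
        ∀ u : Fin n, u.1 < s.1 → v.2.2.1 u = c u)
    by_cases hz : PW p (fun v => v.1 s = a s ∧ v.2.1 s = b s ∧
        ∀ u : Fin n, u.1 < s.1 → v.2.2.1 u = c u) = 0
    · have hz2 : PW p (fun v => v.1 s = a s ∧ v.2.1 s = b s ∧
          ∀ u : Fin n, u.1 < s.1 + 1 → v.2.2.1 u = c u) = 0 := by
        refine le_antisymm (le_of_le_of_eq (PW.mono hp fun v hv => ?_) hz) (PW.nonneg hp _)
        exact ⟨hv.1, hv.2.1, fun u hu => hv.2.2 u (by omega)⟩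
      rw [hz, hz2, mul_zero, zero_mul]
    · have hpos : 0 < (μ {ω | (A s ω, B s ω, fun s' : {s' : Fin n // s' < s} => C s'.1 ω)
          = (a s, b s, fun s' : {s' : Fin n // s' < s} => c s'.1)}).toReal := by
        rw [eS0]
        exact lt_of_le_of_ne (PW.nonneg hp _) (Ne.symm hz)
      have keyr := hiii s (c s) (fun s' : {s' : Fin n // s' ≠ s} => (a s'.1, b s'.1))
        (a s, b s, fun s' : {s' : Fin n // s' < s} => c s'.1) hpos
      beta_reduce at keyr
      rw [eS0, eS1, eS2, eS3] at keyr
      rw [div_mul_div_comm, div_eq_div_iff hz (mul_ne_zero hz hz)] at keyr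
      exact mul_right_cancel₀ hz (by linear_combination keyr)
  -- conclusion
  intro t u v w hw
  have hle : ∀ ω : Ω, ((fun s : {s : Fin n // s ≤ t} => C s.1 ω) = w.2)
      ↔ ∀ (s : Fin n) (h : s ≤ t), C s ω = w.2 ⟨s, h⟩ := fun ω =>
    ⟨fun h s hs => congrFun h ⟨s, hs⟩, fun h => funext fun s => h s.1 s.2⟩
  have eG0 : (μ {ω | (A t ω, fun s : {s : Fin n // s ≤ t} => C s.1 ω) = w}).toReal
      = PW p (fun v' => v'.1 t = w.1 ∧
          ∀ (s : Fin n) (h : s ≤ t), v'.2.2.1 s = w.2 ⟨s, h⟩) := by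
    have hset : {ω | (A t ω, fun s : {s : Fin n // s ≤ t} => C s.1 ω) = w}
        = {ω | (fun v' => v'.1 t = w.1 ∧
            ∀ (s : Fin n) (h : s ≤ t), v'.2.2.1 s = w.2 ⟨s, h⟩) (F ω)} := by
      ext ω
      simp only [Set.mem_setOf_eq, hF, Prod.ext_iff]
      rw [and_congr_right fun _ => hle ω]
    rw [hset]
    exact bridge (fun v' => v'.1 t = w.1 ∧
      ∀ (s : Fin n) (h : s ≤ t), v'.2.2.1 s = w.2 ⟨s, h⟩)
  have eG1 : (μ {ω | B t ω = u ∧ D t ω = v ∧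
      (A t ω, fun s : {s : Fin n // s ≤ t} => C s.1 ω) = w}).toReal
      = PW p (fun v' => v'.2.1 t = u ∧ v'.2.2.2 t = v ∧ v'.1 t = w.1 ∧
          ∀ (s : Fin n) (h : s ≤ t), v'.2.2.1 s = w.2 ⟨s, h⟩) := by
    have hset : {ω | B t ω = u ∧ D t ω = v ∧
        (A t ω, fun s : {s : Fin n // s ≤ t} => C s.1 ω) = w}
        = {ω | (fun v' => v'.2.1 t = u ∧ v'.2.2.2 t = v ∧ v'.1 t = w.1 ∧
            ∀ (s : Fin n) (h : s ≤ t), v'.2.2.1 s = w.2 ⟨s, h⟩) (F ω)} := by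
      ext ω
      simp only [Set.mem_setOf_eq, hF, Prod.ext_iff]
      rw [and_congr_right fun _ => and_congr_right fun _ => and_congr_right fun _ => hle ω]
    rw [hset]
    exact bridge (fun v' => v'.2.1 t = u ∧ v'.2.2.2 t = v ∧ v'.1 t = w.1 ∧
      ∀ (s : Fin n) (h : s ≤ t), v'.2.2.1 s = w.2 ⟨s, h⟩)
  have eG2 : (μ {ω | B t ω = u ∧
      (A t ω, fun s : {s : Fin n // s ≤ t} => C s.1 ω) = w}).toReal
      = PW p (fun v' => v'.2.1 t = u ∧ v'.1 t = w.1 ∧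
          ∀ (s : Fin n) (h : s ≤ t), v'.2.2.1 s = w.2 ⟨s, h⟩) := by
    have hset : {ω | B t ω = u ∧ (A t ω, fun s : {s : Fin n // s ≤ t} => C s.1 ω) = w}
        = {ω | (fun v' => v'.2.1 t = u ∧ v'.1 t = w.1 ∧
            ∀ (s : Fin n) (h : s ≤ t), v'.2.2.1 s = w.2 ⟨s, h⟩) (F ω)} := by
      ext ω
      simp only [Set.mem_setOf_eq, hF, Prod.ext_iff]
      rw [and_congr_right fun _ => and_congr_right fun _ => hle ω]
    rw [hset]
    exact bridge (fun v' => v'.2.1 t = u ∧ v'.1 t = w.1 ∧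
      ∀ (s : Fin n) (h : s ≤ t), v'.2.2.1 s = w.2 ⟨s, h⟩)
  have eG3 : (μ {ω | D t ω = v ∧
      (A t ω, fun s : {s : Fin n // s ≤ t} => C s.1 ω) = w}).toReal
      = PW p (fun v' => v'.2.2.2 t = v ∧ v'.1 t = w.1 ∧
          ∀ (s : Fin n) (h : s ≤ t), v'.2.2.1 s = w.2 ⟨s, h⟩) := by
    have hset : {ω | D t ω = v ∧ (A t ω, fun s : {s : Fin n // s ≤ t} => C s.1 ω) = w}
        = {ω | (fun v' => v'.2.2.2 t = v ∧ v'.1 t = w.1 ∧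
            ∀ (s : Fin n) (h : s ≤ t), v'.2.2.1 s = w.2 ⟨s, h⟩) (F ω)} := by
      ext ω
      simp only [Set.mem_setOf_eq, hF, Prod.ext_iff]
      rw [and_congr_right fun _ => and_congr_right fun _ => hle ω]
    rw [hset]
    exact bridge (fun v' => v'.2.2.2 t = v ∧ v'.1 t = w.1 ∧
      ∀ (s : Fin n) (h : s ≤ t), v'.2.2.1 s = w.2 ⟨s, h⟩)
  have key := core_stmt12 p hp h1 h2 h3 t u v w.1 w.2
  beta_reduce
  beta_reduce at hw
  rw [eG0] at hw
  rw [eG0, eG1, eG2, eG3]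
  have hne : PW p (fun v' => v'.1 t = w.1 ∧
      ∀ (s : Fin n) (h : s ≤ t), v'.2.2.1 s = w.2 ⟨s, h⟩) ≠ 0 := ne_of_gt hw
  rw [div_mul_div_comm, div_eq_div_iff hne (mul_ne_zero hne hne)]
  linear_combination (PW p (fun v' => v'.1 t = w.1 ∧
    ∀ (s : Fin n) (h : s ≤ t), v'.2.2.1 s = w.2 ⟨s, h⟩)) * key
end
end

section
/- For every λ ≥ 0 and every fixed finite nonempty set 𝒰, the minimum of I(X_S ∧ Y | S, U) + λ E[d(X, Y)] over all triples (P_U, σ, W) of a pmf P_U on 𝒰, a sampler kernel σ, and a reconstruction kernel W equals the minimum of the same objective restricted to triples in which σ is a conditional point-mass sampler, i.e., σ(A|x,u) = 1(A = h(x,u)) for some map h : 𝒳_ℳ × 𝒰 → 𝒜_k. -/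
noncomputable section

/-- A probability mass function on a finite type. -/
def IsPMF {T : Type*} [Fintype T] (p : T → ℝ) : Prop :=
  (∀ t, 0 ≤ p t) ∧ ∑ t, p t = 1

/-- Mutual information of a joint pmf `Q` on a product of two finite types;
terms with `Q p = 0` vanish since `0 * log _ = 0`. -/
def mutInfo {α β : Type*} [Fintype α] [Fintype β] (Q : α × β → ℝ) : ℝ :=
  ∑ p : α × β, Q p * Real.log (Q p / ((∑ b, Q (p.1, b)) * (∑ a, Q (a, p.2))))

/-- The family `𝒜_k` of `k`-element subsets of `{1, …, m}`. -/
abbrev SetsK (m k : ℕ) := {A : Finset (Fin m) // A.card = k}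

variable {m : ℕ} {X : Fin m → Type} [∀ i, Fintype (X i)] [∀ i, DecidableEq (X i)]
  [∀ i, Nonempty (X i)] {Y : Type} [Fintype Y] [Nonempty Y]

/-- Restriction of `x ∈ 𝒳_ℳ` to the coordinates in `A`. -/
def restr (A : Finset (Fin m)) (x : ∀ i, X i) : ∀ i : A, X i.1 := fun i => x i.1

/-- The marginal pmf `P_{X_A}` of the coordinates in `A`. -/
def margA (P : (∀ i, X i) → ℝ) (A : Finset (Fin m)) (xA : ∀ i : A, X i.1) : ℝ :=
  ∑ x : ∀ i, X i, if restr A x = xA then P x else 0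

/-- The modified distortion `d_A(x_A, y)`. -/
def dAk (P : (∀ i, X i) → ℝ) (d : (∀ i, X i) → Y → ℝ) (A : Finset (Fin m))
    (xA : ∀ i : A, X i.1) (y : Y) : ℝ :=
  (∑ x : ∀ i, X i, if restr A x = xA then P x * d x y else 0) / margA P A xA

/-- The fixed-set rate distortion function `R_A(Δ)`: the minimum of `I(X_A ∧ Y)` over
joint pmfs of `(X_A, Y)` with first marginal `P_{X_A}` and `E[d_A(X_A,Y)] ≤ Δ`. -/
def RAk (P : (∀ i, X i) → ℝ) (d : (∀ i, X i) → Y → ℝ) (A : Finset (Fin m)) (Δ : ℝ) : ℝ :=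
  sInf {r | ∃ Q : (∀ i : A, X i.1) × Y → ℝ, IsPMF Q ∧
    (∀ xA, ∑ y, Q (xA, y) = margA P A xA) ∧
    (∑ p : (∀ i : A, X i.1) × Y, Q p * dAk P d A p.1 p.2) ≤ Δ ∧ mutInfo Q = r}

/-- `Δ_min,A = Σ_{x_A} P_{X_A}(x_A) min_y d_A(x_A, y)`. -/
def DminA (P : (∀ i, X i) → ℝ) (d : (∀ i, X i) → Y → ℝ) (A : Finset (Fin m)) : ℝ :=
  ∑ xA : ∀ i : A, X i.1,
    margA P A xA * Finset.univ.inf' Finset.univ_nonempty (fun y => dAk P d A xA y)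

variable {U : Type} [Fintype U]

/-- A memoryless sampler kernel `σ(·|x, u)`: a pmf on `𝒜_k` for each `(x, u)`. -/
def IsSamplerU (k : ℕ) (σ : (∀ i, X i) → U → SetsK m k → ℝ) : Prop :=
  ∀ x u, IsPMF (σ x u)

/-- A reconstruction kernel `W(·|A, x_A, u)`: a pmf on `𝒴` for each `(A, x_A, u)`. -/
def IsKernelWU (k : ℕ) (W : ∀ A : SetsK m k, (∀ i : A.1, X i.1) → U → Y → ℝ) : Prop :=
  ∀ A xA u, IsPMF (W A xA u)

/-- `Pr(U = u, S = A)` under the joint pmf `P_U(u) P(x) σ(A|x,u) W(y|A,x_A,u)`. -/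
def prSU (k : ℕ) (P : (∀ i, X i) → ℝ) (PU : U → ℝ)
    (σ : (∀ i, X i) → U → SetsK m k → ℝ) (u : U) (A : SetsK m k) : ℝ :=
  PU u * ∑ x, P x * σ x u A

/-- The conditional joint pmf of `(X_A, Y)` given `S = A, U = u`. -/
def condQU (k : ℕ) (P : (∀ i, X i) → ℝ) (PU : U → ℝ)
    (σ : (∀ i, X i) → U → SetsK m k → ℝ)
    (W : ∀ A : SetsK m k, (∀ i : A.1, X i.1) → U → Y → ℝ)
    (u : U) (A : SetsK m k) : (∀ i : A.1, X i.1) × Y → ℝ := fun p =>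
  (∑ x, if restr A.1 x = p.1 then PU u * P x * σ x u A * W A p.1 u p.2 else 0) /
    prSU k P PU σ u A

/-- The conditional mutual information
`I(X_S ∧ Y | S, U) = Σ_{u,A} Pr(U = u, S = A) I_{u,A}`. -/
def condMIU (k : ℕ) (P : (∀ i, X i) → ℝ) (PU : U → ℝ)
    (σ : (∀ i, X i) → U → SetsK m k → ℝ)
    (W : ∀ A : SetsK m k, (∀ i : A.1, X i.1) → U → Y → ℝ) : ℝ :=
  ∑ u : U, ∑ A : SetsK m k, prSU k P PU σ u A * mutInfo (condQU k P PU σ W u A)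

/-- The expected distortion `E[d(X,Y)]` under the joint pmf
`P_U(u) P(x) σ(A|x,u) W(y|A,x_A,u)`. -/
def expDistMRS (k : ℕ) (P : (∀ i, X i) → ℝ) (d : (∀ i, X i) → Y → ℝ) (PU : U → ℝ)
    (σ : (∀ i, X i) → U → SetsK m k → ℝ)
    (W : ∀ A : SetsK m k, (∀ i : A.1, X i.1) → U → Y → ℝ) : ℝ :=
  ∑ u : U, ∑ x : ∀ i, X i, ∑ A : SetsK m k, ∑ y,
    PU u * P x * σ x u A * W A (restr A.1 x) u y * d x y

lemma mutInfo_nonneg {α β : Type*} [Fintype α] [Fintype β] (Q : α × β → ℝ)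
    (h0 : ∀ p, 0 ≤ Q p) (h1 : ∑ p, Q p = 1) : 0 ≤ mutInfo Q := by
  have key : ∀ p : α × β, Q p - (∑ b, Q (p.1, b)) * (∑ a, Q (a, p.2)) ≤
      Q p * Real.log (Q p / ((∑ b, Q (p.1, b)) * (∑ a, Q (a, p.2)))) := by
    intro p
    set q := (∑ b, Q (p.1, b)) * (∑ a, Q (a, p.2)) with hq
    have hq0 : 0 ≤ q := mul_nonneg (Finset.sum_nonneg fun b _ => h0 _)
      (Finset.sum_nonneg fun a _ => h0 _)
    rcases eq_or_lt_of_le (h0 p) with h | h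
    · simp [← h]; linarith
    · have hq1 : Q p ≤ ∑ b, Q (p.1, b) :=
        Finset.single_le_sum (f := fun b => Q (p.1, b)) (fun b _ => h0 _) (Finset.mem_univ p.2)
      have hq2 : Q p ≤ ∑ a, Q (a, p.2) :=
        Finset.single_le_sum (f := fun a => Q (a, p.2)) (fun a _ => h0 _) (Finset.mem_univ p.1)
      have hqpos : 0 < q := by nlinarith
      have hlog : Real.log (q / Q p) ≤ q / Q p - 1 :=
        Real.log_le_sub_one_of_pos (by positivity)
      have hinv : Real.log (Q p / q) = - Real.log (q / Q p) := by
        rw [Real.log_div h.ne' hqpos.ne', Real.log_div hqpos.ne' h.ne']; ring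
      rw [hinv]
      have h2 : q / Q p * Q p = q := div_mul_cancel₀ _ h.ne'
      nlinarith
  have hsum : ∑ p : α × β, (Q p - (∑ b, Q (p.1, b)) * (∑ a, Q (a, p.2))) ≤ mutInfo Q :=
    Finset.sum_le_sum fun p _ => key p
  have hmarg : ∑ p : α × β, (∑ b, Q (p.1, b)) * (∑ a, Q (a, p.2)) = 1 := by
    rw [Fintype.sum_prod_type]
    have : ∀ a : α, ∑ b : β, (∑ b', Q (a, b')) * (∑ a', Q (a', b))
        = (∑ b', Q (a, b')) * ∑ b : β, (∑ a', Q (a', b)) := fun a => by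
      rw [Finset.mul_sum]
    rw [Finset.sum_congr rfl fun a _ => this a]
    have hA : ∑ b : β, ∑ a', Q (a', b) = 1 := by
      rw [← h1, Fintype.sum_prod_type_right]
    rw [Finset.sum_congr rfl fun a _ => by rw [hA, mul_one]]
    rw [← h1, Fintype.sum_prod_type]
  rw [Finset.sum_sub_distrib, h1, hmarg] at hsum
  linarith


/-- output marginal given `(u, A)` -/
def Vout (k : ℕ) (P : (∀ i, X i) → ℝ) (σ : (∀ i, X i) → U → SetsK m k → ℝ)
    (W : ∀ A : SetsK m k, (∀ i : A.1, X i.1) → U → Y → ℝ) (u : U) (A : SetsK m k)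
    (y : Y) : ℝ :=
  (∑ x, P x * σ x u A * W A (restr A.1 x) u y) / (∑ x, P x * σ x u A)

def gW (k : ℕ) (P : (∀ i, X i) → ℝ) (σ : (∀ i, X i) → U → SetsK m k → ℝ)
    (W : ∀ A : SetsK m k, (∀ i : A.1, X i.1) → U → Y → ℝ) (u : U) (A : SetsK m k)
    (x : ∀ i, X i) : ℝ :=
  ∑ y, W A (restr A.1 x) u y *
    Real.log (W A (restr A.1 x) u y / Vout k P σ W u A y)

def eW (k : ℕ) (W : ∀ A : SetsK m k, (∀ i : A.1, X i.1) → U → Y → ℝ)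
    (d : (∀ i, X i) → Y → ℝ) (u : U) (A : SetsK m k) (x : ∀ i, X i) : ℝ :=
  ∑ y, W A (restr A.1 x) u y * d x y

lemma sum_restr_collapse {A : Finset (Fin m)} (F : (∀ i : A, X i.1) → (∀ i, X i) → ℝ) :
    ∑ xA : ∀ i : A, X i.1, ∑ x, (if restr A x = xA then F xA x else 0)
      = ∑ x, F (restr A x) x := by
  rw [Finset.sum_comm]
  refine Finset.sum_congr rfl fun x _ => ?_
  rw [Finset.sum_ite_eq Finset.univ (restr A x) (fun xA => F xA x)]
  simp

lemma Vout_sum_eq_one (k : ℕ) (P : (∀ i, X i) → ℝ) (σ : (∀ i, X i) → U → SetsK m k → ℝ)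
    (W : ∀ A : SetsK m k, (∀ i : A.1, X i.1) → U → Y → ℝ) (hW : IsKernelWU k W)
    (u : U) (A : SetsK m k) (hZ : (∑ x, P x * σ x u A) ≠ 0) :
    ∑ y, Vout k P σ W u A y = 1 := by
  unfold Vout
  rw [← Finset.sum_div, Finset.sum_comm]
  rw [Finset.sum_congr rfl fun x _ => by
    rw [← Finset.mul_sum, (hW A (restr A.1 x) u).2, mul_one]]
  exact div_self hZ

lemma condMIU_repr (k : ℕ) (P : (∀ i, X i) → ℝ) (hfull : ∀ x, 0 < P x)
    (PU : U → ℝ) (hPU0 : ∀ u, 0 ≤ PU u)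
    (σ : (∀ i, X i) → U → SetsK m k → ℝ) (hσ : IsSamplerU k σ)
    (W : ∀ A : SetsK m k, (∀ i : A.1, X i.1) → U → Y → ℝ) (hW : IsKernelWU k W) :
    condMIU k P PU σ W
      = ∑ u, ∑ x, ∑ A, PU u * P x * σ x u A * gW k P σ W u A x := by
  have main : ∀ u A, prSU k P PU σ u A * mutInfo (condQU k P PU σ W u A)
      = ∑ x, PU u * P x * σ x u A * gW k P σ W u A x := by
    intro u A
    set Z := ∑ x, P x * σ x u A with hZdef
    have hZ0 : 0 ≤ Z := Finset.sum_nonneg fun x _ =>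
      mul_nonneg (hfull x).le ((hσ x u).1 A)
    rcases eq_or_lt_of_le (hPU0 u) with hu | hu
    · have h1 : prSU k P PU σ u A = 0 := by simp [prSU, ← hu]
      simp [h1, ← hu]
    rcases eq_or_lt_of_le hZ0 with hZ | hZ
    · have hσ0 : ∀ x, σ x u A = 0 := by
        intro x
        have h2 := (Finset.sum_eq_zero_iff_of_nonneg (fun x (_ : x ∈ Finset.univ) =>
          mul_nonneg (hfull x).le ((hσ x u).1 A))).mp hZ.symm x (Finset.mem_univ x)
        exact (mul_eq_zero.mp h2).resolve_left (hfull x).ne'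
      have h1 : prSU k P PU σ u A = 0 := by
        simp [prSU, hσ0]
      rw [h1, zero_mul]
      simp [hσ0]
    · -- main case: PU u > 0, Z > 0
      set M : (∀ i : A.1, X i.1) → ℝ :=
        fun xA => ∑ x, if restr A.1 x = xA then P x * σ x u A else 0 with hMdef
      have hM0 : ∀ xA, 0 ≤ M xA := fun xA => Finset.sum_nonneg fun x _ => by
        split
        · exact mul_nonneg (hfull x).le ((hσ x u).1 A)
        · exact le_refl 0
      have hQ : ∀ p, condQU k P PU σ W u A p = M p.1 * W A p.1 u p.2 / Z := by
        intro p
        unfold condQU prSU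
        have : ∀ x, (if restr A.1 x = p.1 then PU u * P x * σ x u A * W A p.1 u p.2 else 0)
            = PU u * ((if restr A.1 x = p.1 then P x * σ x u A else 0) * W A p.1 u p.2) := by
          intro x; split <;> ring
        rw [Finset.sum_congr rfl fun x _ => this x, ← Finset.mul_sum, ← Finset.sum_mul]
        exact mul_div_mul_left _ _ hu.ne'
      have hQ1 : ∀ xA, (∑ y, condQU k P PU σ W u A (xA, y)) = M xA / Z := by
        intro xA
        rw [Finset.sum_congr rfl fun y _ => hQ (xA, y)]
        rw [Finset.sum_congr rfl fun y _ => (mul_div_assoc (M xA) _ Z)]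
        rw [← Finset.mul_sum, ← Finset.sum_div, (hW A xA u).2, mul_one_div]
      have hQ2 : ∀ y, (∑ xA, condQU k P PU σ W u A (xA, y)) = Vout k P σ W u A y := by
        intro y
        rw [Finset.sum_congr rfl fun xA _ => hQ (xA, y)]
        unfold Vout
        rw [← Finset.sum_div, ← hZdef]
        congr 1
        have : ∀ xA, M xA * W A xA u y
            = ∑ x, if restr A.1 x = xA then P x * σ x u A * W A xA u y else 0 := by
          intro xA
          rw [hMdef, Finset.sum_mul]
          exact Finset.sum_congr rfl fun x _ => by split <;> ring
        rw [Finset.sum_congr rfl fun xA _ => this xA]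
        have := sum_restr_collapse (A := A.1)
          (fun xA x => P x * σ x u A * W A xA u y)
        rw [this]
      have hMI : mutInfo (condQU k P PU σ W u A)
          = ∑ p : (∀ i : A.1, X i.1) × Y, (M p.1 / Z) *
              (W A p.1 u p.2 * Real.log (W A p.1 u p.2 / Vout k P σ W u A p.2)) := by
        unfold mutInfo
        refine Finset.sum_congr rfl fun p _ => ?_
        rw [hQ1 p.1, hQ2 p.2, hQ p]
        by_cases hMp : M p.1 = 0
        · simp [hMp]
        by_cases hWp : W A p.1 u p.2 = 0
        · simp [hWp]
        have harg : M p.1 * W A p.1 u p.2 / Z / (M p.1 / Z * Vout k P σ W u A p.2)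
            = W A p.1 u p.2 / Vout k P σ W u A p.2 := by
          rcases eq_or_ne (Vout k P σ W u A p.2) 0 with hV | hV
          · simp [hV]
          · field_simp
        rw [harg]; ring
      have hsum : ∑ x, P x * σ x u A * gW k P σ W u A x
          = ∑ xA, M xA * (∑ y, W A xA u y *
              Real.log (W A xA u y / Vout k P σ W u A y)) := by
        have : ∀ xA, M xA * (∑ y, W A xA u y *
              Real.log (W A xA u y / Vout k P σ W u A y))
            = ∑ x, if restr A.1 x = xA then P x * σ x u A * (∑ y, W A xA u y *
              Real.log (W A xA u y / Vout k P σ W u A y)) else 0 := by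
          intro xA
          rw [hMdef, Finset.sum_mul]
          exact Finset.sum_congr rfl fun x _ => by split <;> ring
        rw [Finset.sum_congr rfl fun xA _ => this xA]
        rw [sum_restr_collapse (A := A.1) (fun xA x => P x * σ x u A *
          (∑ y, W A xA u y * Real.log (W A xA u y / Vout k P σ W u A y)))]
        rfl
      rw [hMI, Fintype.sum_prod_type]
      have : ∀ xA : ∀ i : A.1, X i.1, (∑ y, (M xA / Z) * (W A xA u y *
            Real.log (W A xA u y / Vout k P σ W u A y)))
          = (M xA / Z) * (∑ y, W A xA u y *
            Real.log (W A xA u y / Vout k P σ W u A y)) := fun xA =>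
        (Finset.mul_sum _ _ _).symm
      rw [Finset.sum_congr rfl fun xA _ => this xA]
      have hrhs : ∑ x, PU u * P x * σ x u A * gW k P σ W u A x
          = PU u * ∑ x, P x * σ x u A * gW k P σ W u A x := by
        rw [Finset.mul_sum]
        exact Finset.sum_congr rfl fun x _ => by ring
      rw [hrhs, hsum]
      have hpr : prSU k P PU σ u A = PU u * Z := rfl
      rw [hpr, mul_assoc]
      congr 1
      rw [Finset.mul_sum _ _ Z]
      refine Finset.sum_congr rfl fun xA _ => ?_
      field_simp
  unfold condMIU
  rw [Finset.sum_congr rfl fun u _ => Finset.sum_congr rfl fun A _ => main u A]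
  exact Finset.sum_congr rfl fun u _ => Finset.sum_comm

lemma expDist_repr (k : ℕ) (P : (∀ i, X i) → ℝ) (d : (∀ i, X i) → Y → ℝ) (PU : U → ℝ)
    (σ : (∀ i, X i) → U → SetsK m k → ℝ)
    (W : ∀ A : SetsK m k, (∀ i : A.1, X i.1) → U → Y → ℝ) :
    expDistMRS k P d PU σ W
      = ∑ u, ∑ x, ∑ A, PU u * P x * σ x u A * eW k W d u A x := by
  unfold expDistMRS eW
  refine Finset.sum_congr rfl fun u _ => Finset.sum_congr rfl fun x _ =>
    Finset.sum_congr rfl fun A _ => ?_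
  rw [Finset.mul_sum]
  exact Finset.sum_congr rfl fun y _ => by ring

lemma gW_compare (k : ℕ) (P : (∀ i, X i) → ℝ) (hfull : ∀ x, 0 < P x)
    (σ : (∀ i, X i) → U → SetsK m k → ℝ) (hσ : IsSamplerU k σ)
    (W : ∀ A : SetsK m k, (∀ i : A.1, X i.1) → U → Y → ℝ) (hW : IsKernelWU k W)
    (h : (∀ i, X i) → U → SetsK m k) (hh : ∀ x u, 0 < σ x u (h x u)) (u : U) :
    ∑ x, P x * gW k P (fun x u A => if A = h x u then 1 else 0) W u (h x u) x
      ≤ ∑ x, P x * gW k P σ W u (h x u) x := by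
  classical
  set σh : (∀ i, X i) → U → SetsK m k → ℝ :=
    fun x u A => if A = h x u then 1 else 0 with hσhdef
  have regroup : ∀ F : (∀ i, X i) → SetsK m k → ℝ,
      ∑ x, F x (h x u) = ∑ A, ∑ x, if h x u = A then F x A else 0 := by
    intro F
    rw [Finset.sum_comm]
    refine Finset.sum_congr rfl fun x _ => ?_
    rw [Finset.sum_ite_eq Finset.univ (h x u) (F x)]
    simp
  rw [regroup fun x A => P x * gW k P σh W u A x,
    regroup fun x A => P x * gW k P σ W u A x]
  refine Finset.sum_le_sum fun A _ => ?_
  by_cases hfib : ∃ x, h x u = A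
  swap
  · push_neg at hfib
    simp [hfib]
  obtain ⟨x0, hx0⟩ := hfib
  have hσh0 : ∀ x, (0:ℝ) ≤ σh x u A := fun x => by
    simp only [hσhdef]; split <;> norm_num
  have hσhx0 : σh x0 u A = 1 := by simp [hσhdef, hx0]
  have hσx0 : 0 < σ x0 u A := by
    have := hh x0 u; rwa [hx0] at this
  have hZ'pos : 0 < ∑ x, P x * σh x u A := by
    have h1 : (0:ℝ) < P x0 * σh x0 u A := by
      rw [hσhx0, mul_one]; exact hfull x0
    exact lt_of_lt_of_le h1 (Finset.single_le_sum
      (fun x _ => mul_nonneg (hfull x).le (hσh0 x)) (Finset.mem_univ x0))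
  have hZpos : 0 < ∑ x, P x * σ x u A := by
    have h1 : (0:ℝ) < P x0 * σ x0 u A := mul_pos (hfull x0) hσx0
    exact lt_of_lt_of_le h1 (Finset.single_le_sum
      (fun x _ => mul_nonneg (hfull x).le ((hσ x u).1 A)) (Finset.mem_univ x0))
  have hV0 : ∀ y, 0 ≤ Vout k P σ W u A y := fun y => div_nonneg
    (Finset.sum_nonneg fun x _ => mul_nonneg
      (mul_nonneg (hfull x).le ((hσ x u).1 A)) ((hW A _ u).1 y)) hZpos.le
  have hV'0 : ∀ y, 0 ≤ Vout k P σh W u A y := fun y => div_nonneg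
    (Finset.sum_nonneg fun x _ => mul_nonneg
      (mul_nonneg (hfull x).le (hσh0 x)) ((hW A _ u).1 y)) hZ'pos.le
  have hVpos : ∀ x y, h x u = A → W A (restr A.1 x) u y ≠ 0 →
      0 < Vout k P σ W u A y := by
    intro x y hx hWy
    have hWpos : 0 < W A (restr A.1 x) u y :=
      lt_of_le_of_ne ((hW A _ u).1 y) (Ne.symm hWy)
    have hσx : 0 < σ x u A := by have := hh x u; rwa [hx] at this
    have hterm : 0 < P x * σ x u A * W A (restr A.1 x) u y :=
      mul_pos (mul_pos (hfull x) hσx) hWpos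
    have hnum : 0 < ∑ x', P x' * σ x' u A * W A (restr A.1 x') u y :=
      lt_of_lt_of_le hterm (Finset.single_le_sum (fun x' _ => mul_nonneg
        (mul_nonneg (hfull x').le ((hσ x' u).1 A)) ((hW A _ u).1 y))
        (Finset.mem_univ x))
    exact div_pos hnum hZpos
  have hV'pos : ∀ x y, h x u = A → W A (restr A.1 x) u y ≠ 0 →
      0 < Vout k P σh W u A y := by
    intro x y hx hWy
    have hWpos : 0 < W A (restr A.1 x) u y :=
      lt_of_le_of_ne ((hW A _ u).1 y) (Ne.symm hWy)
    have hσx : σh x u A = 1 := by simp [hσhdef, hx]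
    have hterm : 0 < P x * σh x u A * W A (restr A.1 x) u y := by
      rw [hσx, mul_one]; exact mul_pos (hfull x) hWpos
    have hnum : 0 < ∑ x', P x' * σh x' u A * W A (restr A.1 x') u y :=
      lt_of_lt_of_le hterm (Finset.single_le_sum (fun x' _ => mul_nonneg
        (mul_nonneg (hfull x').le (hσh0 x')) ((hW A _ u).1 y))
        (Finset.mem_univ x))
    exact div_pos hnum hZ'pos
  have expand : ∀ τ : (∀ i, X i) → U → SetsK m k → ℝ,
      (∑ x, if h x u = A then P x * gW k P τ W u A x else 0)
        = ∑ y, ∑ x, if h x u = A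
            then P x * (W A (restr A.1 x) u y *
              Real.log (W A (restr A.1 x) u y / Vout k P τ W u A y)) else 0 := by
    intro τ
    rw [Finset.sum_comm]
    refine Finset.sum_congr rfl fun x _ => ?_
    by_cases hx : h x u = A
    · simp only [if_pos hx, gW, Finset.mul_sum]
    · simp [hx]
  rw [expand σh, expand σ]
  have split : ∀ y x, (if h x u = A then P x * (W A (restr A.1 x) u y *
        Real.log (W A (restr A.1 x) u y / Vout k P σh W u A y)) else 0)
      = (if h x u = A then P x * (W A (restr A.1 x) u y *
        Real.log (W A (restr A.1 x) u y / Vout k P σ W u A y)) else 0)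
      + (if h x u = A then P x * W A (restr A.1 x) u y else 0)
        * (Real.log (Vout k P σ W u A y) - Real.log (Vout k P σh W u A y)) := by
    intro y x
    by_cases hx : h x u = A
    · simp only [if_pos hx]
      by_cases hWy : W A (restr A.1 x) u y = 0
      · simp [hWy]
      · rw [Real.log_div hWy (hV'pos x y hx hWy).ne',
          Real.log_div hWy (hVpos x y hx hWy).ne']
        ring
    · simp [hx]
  have hc : ∀ y, (∑ x, if h x u = A then P x * W A (restr A.1 x) u y else 0)
      = (∑ x, P x * σh x u A) * Vout k P σh W u A y := by
    intro y
    have hnum : (∑ x, P x * σh x u A * W A (restr A.1 x) u y)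
        = ∑ x, if h x u = A then P x * W A (restr A.1 x) u y else 0 := by
      refine Finset.sum_congr rfl fun x _ => ?_
      by_cases hx : h x u = A
      · have : σh x u A = 1 := by simp [hσhdef, hx]
        rw [this, if_pos hx, mul_one]
      · have : σh x u A = 0 := by simp [hσhdef, Ne.symm hx]
        rw [this, if_neg hx, mul_zero, zero_mul]
    rw [show Vout k P σh W u A y = (∑ x, P x * σh x u A * W A (restr A.1 x) u y)
        / (∑ x, P x * σh x u A) from rfl]
    rw [mul_div_cancel₀ _ hZ'pos.ne', hnum]
  have corr : ∑ y, (∑ x, if h x u = A then P x * W A (restr A.1 x) u y else 0)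
      * (Real.log (Vout k P σ W u A y) - Real.log (Vout k P σh W u A y)) ≤ 0 := by
    have key : ∀ y, (∑ x, if h x u = A then P x * W A (restr A.1 x) u y else 0)
        * (Real.log (Vout k P σ W u A y) - Real.log (Vout k P σh W u A y))
        ≤ (∑ x, P x * σh x u A) * (Vout k P σ W u A y - Vout k P σh W u A y) := by
      intro y
      rw [hc y, mul_assoc]
      refine mul_le_mul_of_nonneg_left ?_ hZ'pos.le
      rcases eq_or_lt_of_le (hV'0 y) with hV' | hV'
      · rw [← hV']
        simpa using hV0 y
      · have hnumpos : 0 < ∑ x, P x * σh x u A * W A (restr A.1 x) u y := by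
          have : Vout k P σh W u A y * (∑ x, P x * σh x u A)
              = ∑ x, P x * σh x u A * W A (restr A.1 x) u y := by
            rw [show Vout k P σh W u A y
                = (∑ x, P x * σh x u A * W A (restr A.1 x) u y)
                  / (∑ x, P x * σh x u A) from rfl]
            rw [div_mul_cancel₀ _ hZ'pos.ne']
          rw [← this]
          exact mul_pos hV' hZ'pos
        obtain ⟨x1, _, hx1⟩ := Finset.exists_ne_zero_of_sum_ne_zero hnumpos.ne'
        have hσhx1 : σh x1 u A ≠ 0 := fun hz => hx1 (by rw [hz, mul_zero, zero_mul])
        have hhx1 : h x1 u = A := by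
          by_contra hcon
          exact hσhx1 (by simp [hσhdef, Ne.symm hcon])
        have hWx1 : W A (restr A.1 x1) u y ≠ 0 := fun hz => hx1 (by rw [hz, mul_zero])
        have hVp : 0 < Vout k P σ W u A y := hVpos x1 y hhx1 hWx1
        have hlog : Real.log (Vout k P σ W u A y / Vout k P σh W u A y)
            ≤ Vout k P σ W u A y / Vout k P σh W u A y - 1 :=
          Real.log_le_sub_one_of_pos (div_pos hVp hV')
        rw [Real.log_div hVp.ne' hV'.ne'] at hlog
        have h2 : Vout k P σ W u A y / Vout k P σh W u A y * Vout k P σh W u A y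
            = Vout k P σ W u A y := div_mul_cancel₀ _ hV'.ne'
        nlinarith
    calc ∑ y, (∑ x, if h x u = A then P x * W A (restr A.1 x) u y else 0)
        * (Real.log (Vout k P σ W u A y) - Real.log (Vout k P σh W u A y))
        ≤ ∑ y, (∑ x, P x * σh x u A)
            * (Vout k P σ W u A y - Vout k P σh W u A y) :=
          Finset.sum_le_sum fun y _ => key y
      _ = (∑ x, P x * σh x u A) * ((∑ y, Vout k P σ W u A y)
            - (∑ y, Vout k P σh W u A y)) := by
          rw [← Finset.sum_sub_distrib, Finset.mul_sum]
      _ = 0 := by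
          rw [Vout_sum_eq_one k P σ W hW u A hZpos.ne',
            Vout_sum_eq_one k P σh W hW u A hZ'pos.ne']
          ring
  have final : (∑ y, ∑ x, if h x u = A
      then P x * (W A (restr A.1 x) u y *
        Real.log (W A (restr A.1 x) u y / Vout k P σh W u A y)) else 0)
      = (∑ y, ∑ x, if h x u = A
        then P x * (W A (restr A.1 x) u y *
          Real.log (W A (restr A.1 x) u y / Vout k P σ W u A y)) else 0)
      + ∑ y, (∑ x, if h x u = A then P x * W A (restr A.1 x) u y else 0)
          * (Real.log (Vout k P σ W u A y) - Real.log (Vout k P σh W u A y)) := by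
    rw [← Finset.sum_add_distrib]
    refine Finset.sum_congr rfl fun y _ => ?_
    rw [Finset.sum_congr rfl fun x _ => split y x, Finset.sum_add_distrib,
      Finset.sum_mul]
  rw [final]
  linarith

lemma pointmass_sampler (k : ℕ) (h : (∀ i, X i) → U → SetsK m k) :
    IsSamplerU k (fun x u A => if A = h x u then (1:ℝ) else 0) := by
  intro x u
  constructor
  · intro A; dsimp only; split <;> norm_num
  · rw [Finset.sum_ite_eq' Finset.univ (h x u) fun _ => (1:ℝ)]; simp

lemma expDist_nonneg (k : ℕ) (P : (∀ i, X i) → ℝ) (hP0 : ∀ x, 0 ≤ P x)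
    (d : (∀ i, X i) → Y → ℝ) (hd : ∀ x y, 0 ≤ d x y) (PU : U → ℝ)
    (hPU0 : ∀ u, 0 ≤ PU u) (σ : (∀ i, X i) → U → SetsK m k → ℝ)
    (hσ : IsSamplerU k σ) (W : ∀ A : SetsK m k, (∀ i : A.1, X i.1) → U → Y → ℝ)
    (hW : IsKernelWU k W) : 0 ≤ expDistMRS k P d PU σ W := by
  refine Finset.sum_nonneg fun u _ => Finset.sum_nonneg fun x _ =>
    Finset.sum_nonneg fun A _ => Finset.sum_nonneg fun y _ => ?_
  have := (hW A (restr A.1 x) u).1 y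
  have := (hσ x u).1 A
  have := hd x y
  have := hP0 x
  have := hPU0 u
  positivity

lemma condMIU_nonneg (k : ℕ) (P : (∀ i, X i) → ℝ) (hP0 : ∀ x, 0 ≤ P x)
    (PU : U → ℝ) (hPU0 : ∀ u, 0 ≤ PU u) (σ : (∀ i, X i) → U → SetsK m k → ℝ)
    (hσ : IsSamplerU k σ) (W : ∀ A : SetsK m k, (∀ i : A.1, X i.1) → U → Y → ℝ)
    (hW : IsKernelWU k W) : 0 ≤ condMIU k P PU σ W := by
  refine Finset.sum_nonneg fun u _ => Finset.sum_nonneg fun A _ => ?_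
  have hpr0 : 0 ≤ prSU k P PU σ u A := mul_nonneg (hPU0 u)
    (Finset.sum_nonneg fun x _ => mul_nonneg (hP0 x) ((hσ x u).1 A))
  rcases eq_or_lt_of_le hpr0 with hpr | hpr
  · rw [← hpr, zero_mul]
  refine mul_nonneg hpr0 (mutInfo_nonneg _ ?_ ?_)
  · intro p
    refine div_nonneg (Finset.sum_nonneg fun x _ => ?_) hpr0
    split
    · exact mul_nonneg (mul_nonneg (mul_nonneg (hPU0 u) (hP0 x)) ((hσ x u).1 A))
        ((hW A p.1 u).1 p.2)
    · exact le_refl 0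
  · rw [Fintype.sum_prod_type]
    have h1 : ∀ xA, (∑ y, condQU k P PU σ W u A (xA, y))
        = (∑ x, if restr A.1 x = xA then PU u * P x * σ x u A else 0)
          / prSU k P PU σ u A := by
      intro xA
      unfold condQU
      rw [← Finset.sum_div]
      congr 1
      rw [Finset.sum_comm]
      refine Finset.sum_congr rfl fun x _ => ?_
      by_cases hx : restr A.1 x = xA
      · simp only [if_pos hx]
        rw [← Finset.mul_sum, (hW A xA u).2, mul_one]
      · simp [hx]
    rw [Finset.sum_congr rfl fun xA _ => h1 xA, ← Finset.sum_div]
    rw [sum_restr_collapse (A := A.1) (fun _ x => PU u * P x * σ x u A)]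
    have h2 : ∑ x, PU u * P x * σ x u A = prSU k P PU σ u A := by
      rw [prSU, Finset.mul_sum]
      exact Finset.sum_congr rfl fun x _ => by ring
    rw [h2]
    exact div_self hpr.ne'

/-- for every `λ ≥ 0` the Lagrangian minimum of
`I(X_S ∧ Y | S,U) + λ E[d(X,Y)]` over all triples `(P_U, σ, W)` equals the minimum
over triples whose sampler is a conditional point-mass `σ(A|x,u) = 1(A = h(x,u))`. -/
theorem stmt14 (k : ℕ) (hk1 : 1 ≤ k) (hkm : k ≤ m) [Nonempty U]
    (P : (∀ i, X i) → ℝ) (hP : IsPMF P) (hfull : ∀ x, 0 < P x)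
    (d : (∀ i, X i) → Y → ℝ) (hd : ∀ x y, 0 ≤ d x y) (lam : ℝ) (hlam : 0 ≤ lam) :
    sInf {r | ∃ (PU : U → ℝ) (σ : (∀ i, X i) → U → SetsK m k → ℝ)
        (W : ∀ A : SetsK m k, (∀ i : A.1, X i.1) → U → Y → ℝ),
        IsPMF PU ∧ IsSamplerU k σ ∧ IsKernelWU k W ∧
        condMIU k P PU σ W + lam * expDistMRS k P d PU σ W = r} =
    sInf {r | ∃ (PU : U → ℝ) (h : (∀ i, X i) → U → SetsK m k)
        (W : ∀ A : SetsK m k, (∀ i : A.1, X i.1) → U → Y → ℝ),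
        IsPMF PU ∧ IsKernelWU k W ∧
        condMIU k P PU (fun x u A => if A = h x u then 1 else 0) W +
          lam * expDistMRS k P d PU (fun x u A => if A = h x u then 1 else 0) W = r} := by
  classical
  set S1 : Set ℝ := {r | ∃ (PU : U → ℝ) (σ : (∀ i, X i) → U → SetsK m k → ℝ)
      (W : ∀ A : SetsK m k, (∀ i : A.1, X i.1) → U → Y → ℝ),
      IsPMF PU ∧ IsSamplerU k σ ∧ IsKernelWU k W ∧
      condMIU k P PU σ W + lam * expDistMRS k P d PU σ W = r} with hS1
  set S2 : Set ℝ := {r | ∃ (PU : U → ℝ) (h : (∀ i, X i) → U → SetsK m k)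
      (W : ∀ A : SetsK m k, (∀ i : A.1, X i.1) → U → Y → ℝ),
      IsPMF PU ∧ IsKernelWU k W ∧
      condMIU k P PU (fun x u A => if A = h x u then 1 else 0) W +
        lam * expDistMRS k P d PU (fun x u A => if A = h x u then 1 else 0) W = r}
    with hS2
  -- basic objects
  obtain ⟨A0f, -, hA0⟩ := Finset.exists_subset_card_eq
    (s := (Finset.univ : Finset (Fin m))) (n := k) (by simpa using hkm)
  have hS2sub : S2 ⊆ S1 := by
    rintro r ⟨PU, h, W, h1, h2, h3⟩
    exact ⟨PU, fun x u A => if A = h x u then 1 else 0, W, h1,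
      pointmass_sampler k h, h2, h3⟩
  have hS2ne : S2.Nonempty := by
    refine ⟨_, fun _ => (Fintype.card U : ℝ)⁻¹, fun _ _ => ⟨A0f, hA0⟩,
      fun _ _ _ _ => (Fintype.card Y : ℝ)⁻¹, ⟨fun _ => by positivity, ?_⟩,
      fun _ _ _ => ⟨fun _ => by positivity, ?_⟩, rfl⟩
    · rw [Finset.sum_const, Finset.card_univ, nsmul_eq_mul]
      rw [mul_inv_cancel₀]
      exact_mod_cast Fintype.card_ne_zero
    · rw [Finset.sum_const, Finset.card_univ, nsmul_eq_mul]
      rw [mul_inv_cancel₀]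
      exact_mod_cast Fintype.card_ne_zero
  have hS1lb : ∀ r ∈ S1, (0:ℝ) ≤ r := by
    rintro r ⟨PU, σ, W, h1, h2, h3, rfl⟩
    exact add_nonneg
      (condMIU_nonneg k P (fun x => (hfull x).le) PU h1.1 σ h2 W h3)
      (mul_nonneg hlam (expDist_nonneg k P (fun x => (hfull x).le) d hd PU h1.1
        σ h2 W h3))
  have hbdd1 : BddBelow S1 := ⟨0, fun r hr => hS1lb r hr⟩
  have hbdd2 : BddBelow S2 := ⟨0, fun r hr => hS1lb r (hS2sub hr)⟩
  refine le_antisymm (csInf_le_csInf hbdd1 hS2ne hS2sub) ?_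
  refine le_csInf ⟨_, hS2sub hS2ne.choose_spec⟩ ?_
  rintro r ⟨PU, σ, W, hPU, hσ, hW, rfl⟩
  -- build the derandomized sampler
  have hsupp : ∀ x u, (Finset.univ.filter fun A => 0 < σ x u A).Nonempty := by
    intro x u
    by_contra hcon
    rw [Finset.not_nonempty_iff_eq_empty] at hcon
    have hz : ∀ A : SetsK m k, σ x u A = 0 := by
      intro A
      by_contra hA
      have hApos : 0 < σ x u A := lt_of_le_of_ne ((hσ x u).1 A) (Ne.symm hA)
      have : A ∈ Finset.univ.filter fun A => 0 < σ x u A :=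
        Finset.mem_filter.mpr ⟨Finset.mem_univ A, hApos⟩
      simp [hcon] at this
    have h1 := (hσ x u).2
    rw [Finset.sum_congr rfl fun A _ => hz A, Finset.sum_const, smul_zero] at h1
    exact one_ne_zero h1.symm
  set f : (∀ i, X i) → U → SetsK m k → ℝ :=
    fun x u A => gW k P σ W u A x + lam * eW k W d u A x with hf
  have hchoice := fun x u => Finset.exists_min_image _ (f x u) (hsupp x u)
  choose h hmem hmin using hchoice
  have hh : ∀ x u, 0 < σ x u (h x u) := fun x u =>
    (Finset.mem_filter.mp (hmem x u)).2
  have hσh : IsSamplerU k (fun x u A => if A = h x u then (1:ℝ) else 0) :=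
    pointmass_sampler k h
  -- collapse of point-mass sums
  have coll : ∀ g : U → SetsK m k → (∀ i, X i) → ℝ,
      (∑ u, ∑ x, ∑ A, PU u * P x * (if A = h x u then (1:ℝ) else 0) * g u A x)
        = ∑ u, ∑ x, PU u * P x * g u (h x u) x := by
    intro g
    refine Finset.sum_congr rfl fun u _ => Finset.sum_congr rfl fun x _ => ?_
    calc ∑ A, PU u * P x * (if A = h x u then (1:ℝ) else 0) * g u A x
        = ∑ A, if A = h x u then PU u * P x * g u A x else 0 :=
          Finset.sum_congr rfl fun A _ => by
            by_cases hA : A = h x u <;> simp [hA]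
      _ = PU u * P x * g u (h x u) x := by
          rw [Finset.sum_ite_eq' Finset.univ (h x u)
            fun A => PU u * P x * g u A x]
          simp
  have E1 : condMIU k P PU (fun x u A => if A = h x u then (1:ℝ) else 0) W
      = ∑ u, ∑ x, PU u * P x *
          gW k P (fun x u A => if A = h x u then (1:ℝ) else 0) W u (h x u) x := by
    rw [condMIU_repr k P hfull PU hPU.1 _ hσh W hW]
    exact coll fun u A x =>
      gW k P (fun x u A => if A = h x u then (1:ℝ) else 0) W u A x
  have E2 : expDistMRS k P d PU (fun x u A => if A = h x u then (1:ℝ) else 0) W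
      = ∑ u, ∑ x, PU u * P x * eW k W d u (h x u) x := by
    rw [expDist_repr]
    exact coll fun u A x => eW k W d u A x
  -- step 1 : Gibbs comparison
  have I1 : (∑ u, ∑ x, PU u * P x *
        gW k P (fun x u A => if A = h x u then (1:ℝ) else 0) W u (h x u) x)
      ≤ ∑ u, ∑ x, PU u * P x * gW k P σ W u (h x u) x := by
    refine Finset.sum_le_sum fun u _ => ?_
    have hcmp := gW_compare k P hfull σ hσ W hW h hh u
    calc ∑ x, PU u * P x *
          gW k P (fun x u A => if A = h x u then (1:ℝ) else 0) W u (h x u) x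
        = PU u * ∑ x, P x *
            gW k P (fun x u A => if A = h x u then (1:ℝ) else 0) W u (h x u) x := by
          rw [Finset.mul_sum]
          exact Finset.sum_congr rfl fun x _ => by ring
      _ ≤ PU u * ∑ x, P x * gW k P σ W u (h x u) x :=
          mul_le_mul_of_nonneg_left hcmp (hPU.1 u)
      _ = ∑ x, PU u * P x * gW k P σ W u (h x u) x := by
          rw [Finset.mul_sum]
          exact Finset.sum_congr rfl fun x _ => by ring
  -- step 2 : minimization over the sampler
  have I2 : (∑ u, ∑ x, PU u * P x * f x u (h x u))
      ≤ ∑ u, ∑ x, ∑ A, PU u * P x * σ x u A * f x u A := by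
    refine Finset.sum_le_sum fun u _ => Finset.sum_le_sum fun x _ => ?_
    have hstep : f x u (h x u) ≤ ∑ A, σ x u A * f x u A := by
      have hs : ∑ A, σ x u A * f x u (h x u) = f x u (h x u) := by
        rw [← Finset.sum_mul, (hσ x u).2, one_mul]
      rw [← hs]
      refine Finset.sum_le_sum fun A _ => ?_
      rcases eq_or_lt_of_le ((hσ x u).1 A) with hA | hA
      · rw [← hA, zero_mul, zero_mul]
      · exact mul_le_mul_of_nonneg_left
          (hmin x u A (Finset.mem_filter.mpr ⟨Finset.mem_univ A, hA⟩)) hA.le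
    calc PU u * P x * f x u (h x u)
        ≤ PU u * P x * ∑ A, σ x u A * f x u A :=
          mul_le_mul_of_nonneg_left hstep
            (mul_nonneg (hPU.1 u) (hfull x).le)
      _ = ∑ A, PU u * P x * σ x u A * f x u A := by
          rw [Finset.mul_sum]
          exact Finset.sum_congr rfl fun A _ => by ring
  -- distribution identities
  have distr : (∑ u, ∑ x, ∑ A, PU u * P x * σ x u A * f x u A)
      = (∑ u, ∑ x, ∑ A, PU u * P x * σ x u A * gW k P σ W u A x)
        + lam * ∑ u, ∑ x, ∑ A, PU u * P x * σ x u A * eW k W d u A x := by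
    rw [Finset.mul_sum, ← Finset.sum_add_distrib]
    refine Finset.sum_congr rfl fun u _ => ?_
    rw [Finset.mul_sum, ← Finset.sum_add_distrib]
    refine Finset.sum_congr rfl fun x _ => ?_
    rw [Finset.mul_sum, ← Finset.sum_add_distrib]
    refine Finset.sum_congr rfl fun A _ => ?_
    simp only [hf]
    ring
  have distr2 : (∑ u, ∑ x, PU u * P x * f x u (h x u))
      = (∑ u, ∑ x, PU u * P x * gW k P σ W u (h x u) x)
        + lam * ∑ u, ∑ x, PU u * P x * eW k W d u (h x u) x := by
    rw [Finset.mul_sum, ← Finset.sum_add_distrib]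
    refine Finset.sum_congr rfl fun u _ => ?_
    rw [Finset.mul_sum, ← Finset.sum_add_distrib]
    refine Finset.sum_congr rfl fun x _ => ?_
    simp only [hf]
    ring
  have E3 : condMIU k P PU σ W + lam * expDistMRS k P d PU σ W
      = ∑ u, ∑ x, ∑ A, PU u * P x * σ x u A * f x u A := by
    rw [condMIU_repr k P hfull PU hPU.1 σ hσ W hW, expDist_repr, distr]
  -- the derandomized value is in S2
  have hr'S2 : condMIU k P PU (fun x u A => if A = h x u then (1:ℝ) else 0) W
      + lam * expDistMRS k P d PU (fun x u A => if A = h x u then (1:ℝ) else 0) W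
      ∈ S2 := ⟨PU, h, W, hPU, hW, rfl⟩
  have hr'le : condMIU k P PU (fun x u A => if A = h x u then (1:ℝ) else 0) W
      + lam * expDistMRS k P d PU (fun x u A => if A = h x u then (1:ℝ) else 0) W
      ≤ condMIU k P PU σ W + lam * expDistMRS k P d PU σ W := by
    rw [E1, E2, E3]
    have := mul_le_mul_of_nonneg_left (le_refl
      (∑ u, ∑ x, PU u * P x * eW k W d u (h x u) x)) hlam
    linarith [I1, I2, distr2.symm.le, distr2.le]
  exact le_trans (csInf_le hbdd2 hr'S2) hr'le
end
end
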